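/- Let K be a real valued field and I ⊂ J ⊂ K{x}^N submodules. If the leading modules coincide, L(I) = L(J), then I = J. -/

import Mathlib

open MvPowerSeries Finsupp ENNReal

namespace GrauertRVF

variable {K : Type} [Field K]

/-- total degree of a multi-exponent -/
def deg {σ : Type} (d : σ →₀ ℕ) : ℕ := d.sum fun _ k => k

/-- the `ε`-norm `‖f‖_ε = Σ_d |c_d| ε^d` of a formal power series (value in `ℝ≥0∞`). -/
noncomputable def wnorm {σ : Type} [Fintype σ] (abv : AbsoluteValue K ℝ) (ε : σ → ℝ)
    (f : MvPowerSeries σ K) : ℝ≥0∞ :=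
  ∑' d : σ →₀ ℕ, ENNReal.ofReal (abv (MvPowerSeries.coeff d f) * ∏ i, ε i ^ d i)

/-- the `ε`-norm of a vector of formal power series. -/
noncomputable def vnorm {σ : Type} [Fintype σ] {N : ℕ} (abv : AbsoluteValue K ℝ) (ε : σ → ℝ)
    (f : Fin N → MvPowerSeries σ K) : ℝ≥0∞ :=
  ∑ k, wnorm abv ε (f k)

/-- `f` is a convergent power series. -/
def IsConv {σ : Type} [Fintype σ] (abv : AbsoluteValue K ℝ) (f : MvPowerSeries σ K) : Prop :=
  ∃ ε : σ → ℝ, (∀ i, 0 < ε i) ∧ wnorm abv ε f < ⊤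

/-- `f` is a convergent vector of power series. -/
def IsConvV {σ : Type} [Fintype σ] {N : ℕ} (abv : AbsoluteValue K ℝ) (f : Fin N → MvPowerSeries σ K) : Prop :=
  ∃ ε : σ → ℝ, (∀ i, 0 < ε i) ∧ vnorm abv ε f < ⊤

/-- `x^α > x^β` in the local degree ordering deglex. -/
def MonGT {n : ℕ} (α β : Fin n →₀ ℕ) : Prop :=
  deg α < deg β ∨ (deg α = deg β ∧ ∃ l : Fin n, (∀ j : Fin n, j < l → α j = β j) ∧ α l < β l)

/-- module monomial ordering: `x^α e_i > x^β e_j` iff `x^α > x^β`, or `α = β` and `i < j`. -/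
def MMonGT {n N : ℕ} (p q : (Fin n →₀ ℕ) × Fin N) : Prop :=
  MonGT p.1 q.1 ∨ (p.1 = q.1 ∧ p.2 < q.2)

/-- `x^α e_i` divides `x^β e_j` iff `i = j` and `x^α ∣ x^β`. -/
def MMonDvd {n N : ℕ} (p q : (Fin n →₀ ℕ) × Fin N) : Prop :=
  p.2 = q.2 ∧ p.1 ≤ q.1

/-- `p` is the leading monomial of the vector `f` of power series. -/
def IsLM {n N : ℕ} (f : Fin N → MvPowerSeries (Fin n) K) (p : (Fin n →₀ ℕ) × Fin N) : Prop :=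
  MvPowerSeries.coeff p.1 (f p.2) ≠ 0 ∧
    ∀ q : (Fin n →₀ ℕ) × Fin N, MvPowerSeries.coeff q.1 (f q.2) ≠ 0 → q = p ∨ MMonGT p q

/-- `α` is the leading monomial of the power series `f`. -/
def IsLM1 {n : ℕ} (f : MvPowerSeries (Fin n) K) (α : Fin n →₀ ℕ) : Prop :=
  MvPowerSeries.coeff α f ≠ 0 ∧
    ∀ β : Fin n →₀ ℕ, MvPowerSeries.coeff β f ≠ 0 → β = α ∨ MonGT α β

/-- the tail `f - LT(f)` of `f`, where `p` is the leading monomial of `f`. -/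
noncomputable def tailOf {n N : ℕ} (f : Fin N → MvPowerSeries (Fin n) K)
    (p : (Fin n →₀ ℕ) × Fin N) : Fin N → MvPowerSeries (Fin n) K :=
  fun k => if k = p.2 then
    f k - (MvPowerSeries.monomial p.1) (MvPowerSeries.coeff p.1 (f k)) else f k

/-- formal substitution: `subst Φ f = f(Φ)`; meaningful when each `Φ j` has zero constant term. -/
noncomputable def subst {σ τ : Type} [Fintype σ] [DecidableEq σ] [Fintype τ] [DecidableEq τ]
    (Φ : σ → MvPowerSeries τ K) (f : MvPowerSeries σ K) : MvPowerSeries τ K :=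
  fun e => ∑ d ∈ Finset.Iic (Finsupp.equivFunOnFinite.symm fun _ : σ => deg e),
    MvPowerSeries.coeff d f * MvPowerSeries.coeff e (∏ j, Φ j ^ d j)

/-- every monomial of `f` has total degree at least `l`, i.e. `f ∈ 𝔪^l`. -/
def OrderGE {σ : Type} [Fintype σ] (l : ℕ) (f : MvPowerSeries σ K) : Prop :=
  ∀ d, MvPowerSeries.coeff d f ≠ 0 → l ≤ deg d

/-- formal partial derivative `∂f/∂x_i`. -/
noncomputable def pd {n : ℕ} (i : Fin n) (f : MvPowerSeries (Fin n) K) :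
    MvPowerSeries (Fin n) K :=
  fun d => (((d i) + 1 : ℕ) : K) * MvPowerSeries.coeff (d + Finsupp.single i 1) f

/-- the Hessian matrix `(∂²f/∂x_i∂x_j(0))`. -/
noncomputable def hess {n : ℕ} (f : MvPowerSeries (Fin n) K) : Matrix (Fin n) (Fin n) K :=
  Matrix.of fun i j => if i = j then 2 * MvPowerSeries.coeff (Finsupp.single i 2) f
    else MvPowerSeries.coeff (Finsupp.single i 1 + Finsupp.single j 1) f

/-- right equivalence: `g = φ(f)` for a `K`-algebra automorphism `φ` of `K{x}`,
given by a convergent coordinate change `Φ` with zero constant terms and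
invertible linear part. -/
def RightEquiv {n : ℕ} (abv : AbsoluteValue K ℝ) (f g : MvPowerSeries (Fin n) K) : Prop :=
  ∃ Φ : Fin n → MvPowerSeries (Fin n) K,
    (∀ i, IsConv abv (Φ i)) ∧
    (∀ i, MvPowerSeries.constantCoeff (Φ i) = 0) ∧
    (Matrix.of fun i j => MvPowerSeries.coeff (Finsupp.single j 1) (Φ i)).det ≠ 0 ∧
    subst Φ f = g

/-- contact equivalence: `g = u·φ(f)` for an automorphism `φ` and a unit `u` of `K{x}`. -/
def ContactEquiv {n : ℕ} (abv : AbsoluteValue K ℝ) (f g : MvPowerSeries (Fin n) K) : Prop :=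
  ∃ (Φ : Fin n → MvPowerSeries (Fin n) K) (u : MvPowerSeries (Fin n) K),
    (∀ i, IsConv abv (Φ i)) ∧
    (∀ i, MvPowerSeries.constantCoeff (Φ i) = 0) ∧
    (Matrix.of fun i j => MvPowerSeries.coeff (Finsupp.single j 1) (Φ i)).det ≠ 0 ∧
    IsConv abv u ∧ MvPowerSeries.constantCoeff u ≠ 0 ∧
    u * subst Φ f = g

/-- the `x`-part of a mixed exponent. -/
noncomputable def xpart {n q : ℕ} (d : (Fin n ⊕ Fin q) →₀ ℕ) : Fin n →₀ ℕ :=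
  Finsupp.equivFunOnFinite.symm fun i => d (Sum.inl i)

/-- the `s`-part of a mixed exponent. -/
noncomputable def spart {n q : ℕ} (d : (Fin n ⊕ Fin q) →₀ ℕ) : Fin q →₀ ℕ :=
  Finsupp.equivFunOnFinite.symm fun j => d (Sum.inr j)

/-- the degree in the second block of variables. -/
def sdeg {n q : ℕ} (d : (Fin n ⊕ Fin q) →₀ ℕ) : ℕ := ∑ j : Fin q, d (Sum.inr j)

/-- `g` involves only the first block of variables. -/
def OnlyX {n q : ℕ} (g : MvPowerSeries (Fin n ⊕ Fin q) K) : Prop :=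
  ∀ d, MvPowerSeries.coeff d g ≠ 0 → ∀ j : Fin q, d (Sum.inr j) = 0

/-- `g` involves only the second block of variables. -/
def OnlyS {n q : ℕ} (g : MvPowerSeries (Fin n ⊕ Fin q) K) : Prop :=
  ∀ d, MvPowerSeries.coeff d g ≠ 0 → ∀ i : Fin n, d (Sum.inl i) = 0

/-- `g` is homogeneous of degree `e` in the second block of variables. -/
def SHomog {n q : ℕ} (e : ℕ) (g : MvPowerSeries (Fin n ⊕ Fin q) K) : Prop :=
  ∀ d, MvPowerSeries.coeff d g ≠ 0 → sdeg d = e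

/-- `g` is a polynomial of degree `≤ e` in the second block of variables. -/
def SDegLE {n q : ℕ} (e : ℕ) (g : MvPowerSeries (Fin n ⊕ Fin q) K) : Prop :=
  ∀ d, MvPowerSeries.coeff d g ≠ 0 → sdeg d ≤ e

/-- `g` has order `≥ l` in the second block of variables, i.e. `g ∈ 𝔪_s^l·K[[x,s]]`. -/
def SOrderGE {n q : ℕ} (l : ℕ) (g : MvPowerSeries (Fin n ⊕ Fin q) K) : Prop :=
  ∀ d, MvPowerSeries.coeff d g ≠ 0 → l ≤ sdeg d

/-- a polynomial regarded as a power series. -/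
def polyToPS {n : ℕ} (p : MvPolynomial (Fin n) K) : MvPowerSeries (Fin n) K :=
  fun d => MvPolynomial.coeff d p

/-- inclusion `K{x} → K{x,s}`. -/
noncomputable def inclX {n q : ℕ} (f : MvPowerSeries (Fin n) K) :
    MvPowerSeries (Fin n ⊕ Fin q) K :=
  subst (fun i => MvPowerSeries.X (Sum.inl i)) f

/-- inclusion `K{s} → K{x,s}`. -/
noncomputable def inclS {n q : ℕ} (f : MvPowerSeries (Fin q) K) :
    MvPowerSeries (Fin n ⊕ Fin q) K :=
  subst (fun j => MvPowerSeries.X (Sum.inr j)) f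


/-- `I` is a submodule of `K{x}^N` over `K{x}`: a set of convergent power series vectors
containing `0`, closed under addition and under multiplication by convergent scalars. -/
def IsConvSubmodule {K : Type} [Field K] (abv : AbsoluteValue K ℝ) {n N : ℕ}
    (I : Set (Fin N → MvPowerSeries (Fin n) K)) : Prop :=
  (0 ∈ I) ∧ (∀ g ∈ I, IsConvV abv g) ∧ (∀ g ∈ I, ∀ h ∈ I, g + h ∈ I) ∧
  (∀ a : MvPowerSeries (Fin n) K, IsConv abv a → ∀ g ∈ I, (fun k => a * g k) ∈ I)

/-- `S` is a standard basis of the submodule `I ⊆ K{x}^N`:  `S ⊆ I ∖ {0}` and every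
leading monomial of a nonzero element of `I` is divisible by some `LM(S j)`. -/
def IsStdBasis {K : Type} [Field K] (abv : AbsoluteValue K ℝ) {n N m : ℕ}
    (I : Set (Fin N → MvPowerSeries (Fin n) K))
    (S : Fin m → Fin N → MvPowerSeries (Fin n) K) : Prop :=
  (∀ j, S j ∈ I) ∧ (∀ j, S j ≠ 0) ∧
  ∀ g ∈ I, g ≠ 0 → ∀ p : (Fin n →₀ ℕ) × Fin N, IsLM g p →
    ∃ j, ∃ p' : (Fin n →₀ ℕ) × Fin N, IsLM (S j) p' ∧ MMonDvd p' p

/-- `r` is the remainder (normal form) of the Grauert division of `g` by the ordered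
tuple `S` in `K{x}^N`: `g = Σ_j q_j S_j + r` with convergent `q_j`, `r`, and no monomial
of `r` is divisible by any `LM(S j)`. -/
def IsRemainder {K : Type} [Field K] (abv : AbsoluteValue K ℝ) {n N m : ℕ}
    (S : Fin m → Fin N → MvPowerSeries (Fin n) K)
    (g r : Fin N → MvPowerSeries (Fin n) K) : Prop :=
  (∃ q : Fin m → MvPowerSeries (Fin n) K, (∀ j, IsConv abv (q j)) ∧
    g = (fun k => ∑ j, q j * S j k) + r) ∧
  IsConvV abv r ∧
  ∀ p : (Fin n →₀ ℕ) × Fin N, MvPowerSeries.coeff p.1 (r p.2) ≠ 0 →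
    ∀ j (p' : (Fin n →₀ ℕ) × Fin N), IsLM (S j) p' → ¬ MMonDvd p' p

/-- the leading module `L(T)`: the `K[x]`-submodule of `K[x]^N` generated by the leading
monomials of the nonzero elements of `T`. -/
noncomputable def leadingModule {K : Type} [Field K] {n N : ℕ}
    (T : Set (Fin N → MvPowerSeries (Fin n) K)) :
    Submodule (MvPolynomial (Fin n) K) (Fin N → MvPolynomial (Fin n) K) :=
  Submodule.span _ {v | ∃ g ∈ T, ∃ p : (Fin n →₀ ℕ) × Fin N, IsLM g p ∧
    v = Pi.single p.2 ((MvPolynomial.monomial p.1) (1 : K))}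

-- ### section A : order lemmas

lemma deg_eq_sum {n : ℕ} (d : Fin n →₀ ℕ) : deg d = ∑ i, d i :=
  Finsupp.sum_fintype _ _ (fun _ => rfl)

lemma coord_le_deg {n : ℕ} (d : Fin n →₀ ℕ) (i : Fin n) : d i ≤ deg d := by
  rw [deg_eq_sum]
  exact Finset.single_le_sum (fun _ _ => Nat.zero_le _) (Finset.mem_univ i)

lemma deg_add {n : ℕ} (a b : Fin n →₀ ℕ) : deg (a + b) = deg a + deg b := by
  simp [deg_eq_sum, Finsupp.add_apply, Finset.sum_add_distrib]

lemma deg_mono {n : ℕ} {a b : Fin n →₀ ℕ} (h : a ≤ b) : deg a ≤ deg b := by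
  rw [deg_eq_sum, deg_eq_sum]
  exact Finset.sum_le_sum fun i _ => (Finsupp.le_def.mp h) i

def LexLT {n : ℕ} (α β : Fin n →₀ ℕ) : Prop :=
  ∃ l : Fin n, (∀ j : Fin n, j < l → α j = β j) ∧ α l < β l

lemma LexLT.trans {n : ℕ} {α β γ : Fin n →₀ ℕ} (h1 : LexLT α β) (h2 : LexLT β γ) :
    LexLT α γ := by
  obtain ⟨l1, e1, lt1⟩ := h1
  obtain ⟨l2, e2, lt2⟩ := h2
  rcases lt_trichotomy l1 l2 with h | h | h
  · exact ⟨l1, fun j hj => (e1 j hj).trans (e2 j (hj.trans h)), lt1.trans_le (le_of_eq (e2 l1 h))⟩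
  · subst h
    exact ⟨l1, fun j hj => (e1 j hj).trans (e2 j hj), lt1.trans lt2⟩
  · exact ⟨l2, fun j hj => (e1 j (hj.trans h)).trans (e2 j hj), (e1 l2 h).trans_lt lt2⟩

lemma LexLT.irrefl {n : ℕ} (α : Fin n →₀ ℕ) : ¬ LexLT α α := by
  rintro ⟨l, _, hl⟩; exact lt_irrefl _ hl

lemma lexlt_total {n : ℕ} {α β : Fin n →₀ ℕ} (h : α ≠ β) : LexLT α β ∨ LexLT β α := by
  classical
  have hne : (Finset.univ.filter fun j => α j ≠ β j).Nonempty := by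
    by_contra hc
    rw [Finset.not_nonempty_iff_eq_empty, Finset.filter_eq_empty_iff] at hc
    exact h (Finsupp.ext fun j => not_not.mp (hc (Finset.mem_univ j)))
  set l := (Finset.univ.filter fun j => α j ≠ β j).min' hne with hl
  have hlmem := (Finset.univ.filter fun j => α j ≠ β j).min'_mem hne
  rw [Finset.mem_filter] at hlmem
  have heq : ∀ j, j < l → α j = β j := by
    intro j hj
    by_contra hne2
    exact absurd (Finset.min'_le _ j (Finset.mem_filter.mpr ⟨Finset.mem_univ j, hne2⟩))
      (not_le.mpr hj)
  rcases lt_or_gt_of_ne hlmem.2 with h' | h'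
  · exact Or.inl ⟨l, heq, h'⟩
  · exact Or.inr ⟨l, fun j hj => (heq j hj).symm, h'⟩

lemma LexLT.add_left {n : ℕ} {α β : Fin n →₀ ℕ} (γ : Fin n →₀ ℕ) (h : LexLT α β) :
    LexLT (γ + α) (γ + β) := by
  obtain ⟨l, e, lt⟩ := h
  exact ⟨l, fun j hj => by simp [Finsupp.add_apply, e j hj], by
    simp only [Finsupp.add_apply]; omega⟩

lemma MonGT.trans {n : ℕ} {α β γ : Fin n →₀ ℕ} (h1 : MonGT α β) (h2 : MonGT β γ) :
    MonGT α γ := by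
  rcases h1 with h1 | ⟨hd1, hl1⟩ <;> rcases h2 with h2 | ⟨hd2, hl2⟩
  · exact Or.inl (h1.trans h2)
  · exact Or.inl (hd2 ▸ h1)
  · exact Or.inl (hd1 ▸ h2)
  · exact Or.inr ⟨hd1.trans hd2, LexLT.trans hl1 hl2⟩

lemma MonGT.irrefl {n : ℕ} (α : Fin n →₀ ℕ) : ¬ MonGT α α := by
  rintro (h | ⟨_, h⟩)
  · exact lt_irrefl _ h
  · exact LexLT.irrefl α h

lemma mongt_total {n : ℕ} {α β : Fin n →₀ ℕ} (h : α ≠ β) : MonGT α β ∨ MonGT β α := by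
  rcases lt_trichotomy (deg α) (deg β) with hd | hd | hd
  · exact Or.inl (Or.inl hd)
  · rcases lexlt_total h with hl | hl
    · exact Or.inl (Or.inr ⟨hd, hl⟩)
    · exact Or.inr (Or.inr ⟨hd.symm, hl⟩)
  · exact Or.inr (Or.inl hd)

lemma MonGT.add_left {n : ℕ} {α β : Fin n →₀ ℕ} (γ : Fin n →₀ ℕ) (h : MonGT α β) :
    MonGT (γ + α) (γ + β) := by
  rcases h with h | ⟨hd, hl⟩
  · exact Or.inl (by rw [deg_add, deg_add]; omega)
  · exact Or.inr ⟨by rw [deg_add, deg_add, hd], LexLT.add_left γ hl⟩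

lemma MonGT.deg_le {n : ℕ} {α β : Fin n →₀ ℕ} (h : MonGT α β) : deg α ≤ deg β := by
  rcases h with h | ⟨h, _⟩; exact h.le; exact h.le

section MM
variable {n N : ℕ}

lemma MMonGT.trans {p q r : (Fin n →₀ ℕ) × Fin N} (h1 : MMonGT p q) (h2 : MMonGT q r) :
    MMonGT p r := by
  rcases h1 with h1 | ⟨he1, hi1⟩ <;> rcases h2 with h2 | ⟨he2, hi2⟩
  · exact Or.inl (h1.trans h2)
  · exact Or.inl (he2 ▸ h1)
  · exact Or.inl (he1 ▸ h2)
  · exact Or.inr ⟨he1.trans he2, hi1.trans hi2⟩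

lemma MMonGT.irrefl (p : (Fin n →₀ ℕ) × Fin N) : ¬ MMonGT p p := by
  rintro (h | ⟨_, h⟩)
  · exact MonGT.irrefl _ h
  · exact lt_irrefl _ h

lemma MMonGT.asymm {p q : (Fin n →₀ ℕ) × Fin N} (h1 : MMonGT p q) (h2 : MMonGT q p) : False :=
  MMonGT.irrefl p (h1.trans h2)

lemma mmongt_total {p q : (Fin n →₀ ℕ) × Fin N} (h : p ≠ q) : MMonGT p q ∨ MMonGT q p := by
  by_cases h1 : p.1 = q.1
  · have h2 : p.2 ≠ q.2 := fun h2 => h (Prod.ext h1 h2)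
    rcases lt_or_gt_of_ne h2 with h' | h'
    · exact Or.inl (Or.inr ⟨h1, h'⟩)
    · exact Or.inr (Or.inr ⟨h1.symm, h'⟩)
  · rcases mongt_total h1 with h' | h'
    · exact Or.inl (Or.inl h')
    · exact Or.inr (Or.inl h')

lemma MMonGT.add_left {p q : (Fin n →₀ ℕ) × Fin N} (γ : Fin n →₀ ℕ) (h : MMonGT p q) :
    MMonGT (γ + p.1, p.2) (γ + q.1, q.2) := by
  rcases h with h | ⟨he, hi⟩
  · exact Or.inl (MonGT.add_left γ h)
  · exact Or.inr ⟨by rw [he], hi⟩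

lemma MMonGT.deg_le {p q : (Fin n →₀ ℕ) × Fin N} (h : MMonGT p q) : deg p.1 ≤ deg q.1 := by
  rcases h with h | ⟨he, _⟩; · exact h.deg_le
  · exact le_of_eq (by rw [he])

-- finiteness of sets of bounded degree
lemma finite_deg_le (D : ℕ) : {p : (Fin n →₀ ℕ) × Fin N | deg p.1 ≤ D}.Finite := by
  classical
  have : {p : (Fin n →₀ ℕ) × Fin N | deg p.1 ≤ D} ⊆
      (↑((Finset.Iic (Finsupp.equivFunOnFinite.symm fun _ : Fin n => D)) ×ˢ
        (Finset.univ : Finset (Fin N))) : Set ((Fin n →₀ ℕ) × Fin N)) := by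
    intro p hp
    simp only [Finset.coe_product, Set.mem_prod, Finset.mem_coe, Finset.mem_Iic,
      Finset.coe_univ, Set.mem_univ, and_true]
    rw [Finsupp.le_def]
    intro i
    exact le_trans (coord_le_deg _ i) hp
  exact Set.Finite.subset (Finset.finite_toSet _) this

lemma gtSet_finite (p : (Fin n →₀ ℕ) × Fin N) : {q | MMonGT q p}.Finite :=
  (finite_deg_le (deg p.1)).subset fun _ hq => MMonGT.deg_le hq

noncomputable def rk (p : (Fin n →₀ ℕ) × Fin N) : ℕ := {q | MMonGT q p}.ncard

lemma rk_lt {p' p : (Fin n →₀ ℕ) × Fin N} (h : MMonGT p' p) : rk p' < rk p := by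
  apply Set.ncard_lt_ncard _ (gtSet_finite p)
  constructor
  · exact fun q hq => MMonGT.trans hq h
  · intro hsub
    exact MMonGT.irrefl p' (hsub h)

-- greatest element of a finite set
lemma finset_exists_greatest (s : Finset ((Fin n →₀ ℕ) × Fin N)) (hs : s.Nonempty) :
    ∃ p ∈ s, ∀ q ∈ s, q = p ∨ MMonGT p q := by
  classical
  induction s using Finset.induction_on with
  | empty => exact absurd hs (by simp)
  | @insert a s ha ih =>
    by_cases hse : s.Nonempty
    · obtain ⟨p, hp, hgr⟩ := ih hse
      by_cases hap : a = p
      · subst hap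
        exact ⟨a, Finset.mem_insert_self a s, fun q hq => by
          rcases Finset.mem_insert.mp hq with h | h
          · exact Or.inl h
          · exact hgr q h⟩
      · rcases mmongt_total hap with h | h
        · refine ⟨a, Finset.mem_insert_self a s, fun q hq => ?_⟩
          rcases Finset.mem_insert.mp hq with h' | h'
          · exact Or.inl h'
          · rcases hgr q h' with h'' | h''
            · exact Or.inr (h''.symm ▸ h)
            · exact Or.inr (h.trans h'')
        · refine ⟨p, Finset.mem_insert.mpr (Or.inr hp), fun q hq => ?_⟩
          rcases Finset.mem_insert.mp hq with h' | h'
          · exact Or.inr (h' ▸ h)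
          · exact hgr q h'
    · rw [Finset.not_nonempty_iff_eq_empty] at hse
      subst hse
      exact ⟨a, Finset.mem_insert_self a ∅, fun q hq => by
        rcases Finset.mem_insert.mp hq with h | h
        · exact Or.inl h
        · exact absurd h (by simp)⟩

-- leading monomial existence / uniqueness
lemma exists_isLM {f : Fin N → MvPowerSeries (Fin n) K} (hf : f ≠ 0) :
    ∃ p, IsLM f p := by
  classical
  have hex : ∃ p : (Fin n →₀ ℕ) × Fin N, MvPowerSeries.coeff p.1 (f p.2) ≠ 0 := by
    by_contra hc
    push_neg at hc
    exact hf (funext fun k => MvPowerSeries.ext fun d => by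
      simpa using hc (d, k))
  obtain ⟨p0, hp0⟩ := hex
  set D := deg p0.1 with hD
  set sfin : Finset ((Fin n →₀ ℕ) × Fin N) :=
    ((Finset.Iic (Finsupp.equivFunOnFinite.symm fun _ : Fin n => D)) ×ˢ Finset.univ).filter
      (fun q => deg q.1 ≤ D ∧ MvPowerSeries.coeff q.1 (f q.2) ≠ 0) with hsfin
  have hmm : ∀ q : (Fin n →₀ ℕ) × Fin N, q ∈ sfin ↔
      (deg q.1 ≤ D ∧ MvPowerSeries.coeff q.1 (f q.2) ≠ 0) := by
    intro q
    rw [hsfin, Finset.mem_filter, Finset.mem_product]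
    constructor
    · rintro ⟨_, h2⟩; exact h2
    · rintro ⟨h1, h2⟩
      refine ⟨⟨?_, Finset.mem_univ _⟩, h1, h2⟩
      rw [Finset.mem_Iic, Finsupp.le_def]
      intro i
      simpa using le_trans (coord_le_deg _ i) h1
  have hp0mem : p0 ∈ sfin := (hmm p0).mpr ⟨le_refl _, hp0⟩
  obtain ⟨p, hpmem, hgr⟩ := finset_exists_greatest sfin ⟨p0, hp0mem⟩
  have hpc := (hmm p).mp hpmem
  have hdegp : deg p.1 ≤ D := by
    rcases hgr p0 hp0mem with h | h
    · rw [← h]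
    · exact h.deg_le
  refine ⟨p, hpc.2, fun q hq => ?_⟩
  by_cases hdq : deg q.1 ≤ D
  · exact hgr q ((hmm q).mpr ⟨hdq, hq⟩)
  · exact Or.inr (Or.inl (Or.inl (lt_of_le_of_lt hdegp (not_le.mp hdq))))

lemma isLM_unique {f : Fin N → MvPowerSeries (Fin n) K}
    {p p' : (Fin n →₀ ℕ) × Fin N} (h : IsLM f p) (h' : IsLM f p') : p = p' := by
  rcases h.2 p' h'.1 with he | hgt
  · exact he.symm
  · rcases h'.2 p h.1 with he | hgt'
    · exact he
    · exact absurd hgt (fun hc => MMonGT.asymm hc hgt')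

end MM

section B
variable {n N : ℕ}

lemma mmondvd_of_mem_span {m : ℕ} (P : Fin m → (Fin n →₀ ℕ) × Fin N)
    (p : (Fin n →₀ ℕ) × Fin N)
    (hmem : (Pi.single p.2 ((MvPolynomial.monomial p.1) (1 : K)) : Fin N → MvPolynomial (Fin n) K)
      ∈ Submodule.span (MvPolynomial (Fin n) K)
        (Set.range fun j =>
          (Pi.single (P j).2 ((MvPolynomial.monomial (P j).1) (1 : K)) :
            Fin N → MvPolynomial (Fin n) K))) :
    ∃ j, MMonDvd (P j) p := by
  classical
  rw [Submodule.mem_span_set'] at hmem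
  obtain ⟨nn, f, g, hsum⟩ := hmem
  have h1 : MvPolynomial.coeff p.1
      ((∑ i : Fin nn, f i • (g i : Fin N → MvPolynomial (Fin n) K)) p.2) = 1 := by
    rw [hsum]
    simp [Pi.single_apply, MvPolynomial.coeff_monomial]
  rw [Finset.sum_apply] at h1
  rw [MvPolynomial.coeff_sum] at h1
  have h2 : ∃ i : Fin nn, MvPolynomial.coeff p.1 ((f i • (g i : Fin N → MvPolynomial (Fin n) K)) p.2) ≠ 0 := by
    by_contra hc
    push_neg at hc
    rw [Finset.sum_eq_zero (fun i _ => hc i)] at h1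
    exact one_ne_zero h1.symm
  obtain ⟨i, hi⟩ := h2
  obtain ⟨j, hj⟩ := (g i).2
  refine ⟨j, ?_⟩
  rw [← hj] at hi
  simp only [Pi.smul_apply, Pi.single_apply, smul_eq_mul] at hi
  by_cases he : p.2 = (P j).2
  · rw [if_pos he, MvPolynomial.coeff_mul_monomial'] at hi
    by_cases hle : (P j).1 ≤ p.1
    · exact ⟨he.symm, hle⟩
    · rw [if_neg hle] at hi
      exact absurd rfl hi
  · rw [if_neg he] at hi
    simp at hi

lemma exists_std_basis (I J : Set (Fin N → MvPowerSeries (Fin n) K))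
    (hL : leadingModule I = leadingModule J) :
    ∃ (m : ℕ) (S : Fin m → Fin N → MvPowerSeries (Fin n) K)
      (P : Fin m → (Fin n →₀ ℕ) × Fin N),
      (∀ j, S j ∈ I) ∧ (∀ j, IsLM (S j) (P j)) ∧
      ∀ g ∈ J, ∀ p, IsLM g p → ∃ j, MMonDvd (P j) p := by
  classical
  set gsetI : Set (Fin N → MvPolynomial (Fin n) K) :=
    {v | ∃ g ∈ I, ∃ p : (Fin n →₀ ℕ) × Fin N, IsLM g p ∧
      v = Pi.single p.2 ((MvPolynomial.monomial p.1) (1 : K))} with hgsetI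
  obtain ⟨G, hGfin, hGspan⟩ := Submodule.fg_def.mp (IsNoetherian.noetherian (leadingModule J))
  have hxspan : ∀ x ∈ G, ∃ T : Finset (Fin N → MvPolynomial (Fin n) K),
      ↑T ⊆ gsetI ∧ x ∈ Submodule.span (MvPolynomial (Fin n) K) (↑T : Set _) := by
    intro x hx
    apply Submodule.mem_span_finite_of_mem_span
    have : x ∈ leadingModule I := by
      rw [hL, ← hGspan]
      exact Submodule.subset_span hx
    exact this
  choose Tf hTsub hTmem using hxspan
  set T : Set (Fin N → MvPolynomial (Fin n) K) := ⋃ (x : _) (hx : x ∈ G), ↑(Tf x hx) with hT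
  have hTfin : T.Finite := hGfin.biUnion' (fun x hx => (Tf x hx).finite_toSet)
  have hTsub' : T ⊆ gsetI := by
    intro v hv
    simp only [hT, Set.mem_iUnion] at hv
    obtain ⟨x, hx, hv⟩ := hv
    exact hTsub x hx hv
  have hspanT : Submodule.span (MvPolynomial (Fin n) K) T = leadingModule I := by
    apply le_antisymm
    · rw [Submodule.span_le]
      exact hTsub'.trans Submodule.subset_span
    · rw [hL, ← hGspan, Submodule.span_le]
      intro x hx
      exact Submodule.span_mono (by
        intro v hv
        simp only [hT, Set.mem_iUnion]
        exact ⟨x, hx, hv⟩) (hTmem x hx)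
  -- enumerate T
  set Tfs := hTfin.toFinset with hTfs
  set m := Tfs.card with hm
  set e : Fin m ≃ Tfs := Tfs.equivFin.symm with he
  have hwit : ∀ j : Fin m, ∃ (g : Fin N → MvPowerSeries (Fin n) K)
      (p : (Fin n →₀ ℕ) × Fin N), g ∈ I ∧ IsLM g p ∧
      ((e j : Fin N → MvPolynomial (Fin n) K) =
        Pi.single p.2 ((MvPolynomial.monomial p.1) (1 : K))) := by
    intro j
    have : ((e j : Fin N → MvPolynomial (Fin n) K)) ∈ T := by
      have := (e j).2
      rwa [Set.Finite.mem_toFinset] at this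
    obtain ⟨g, hg, p, hp, hv⟩ := hTsub' this
    exact ⟨g, p, hg, hp, hv⟩
  choose S P hSI hSLM hSv using hwit
  refine ⟨m, S, P, hSI, hSLM, ?_⟩
  intro g hg p hp
  apply mmondvd_of_mem_span (K := K) P p
  have hrange : (Set.range fun j =>
      (Pi.single (P j).2 ((MvPolynomial.monomial (P j).1) (1 : K)) :
        Fin N → MvPolynomial (Fin n) K)) = T := by
    ext v
    constructor
    · rintro ⟨j, rfl⟩
      have hmem := (e j).2
      rw [Set.Finite.mem_toFinset] at hmem
      show Pi.single (P j).2 ((MvPolynomial.monomial (P j).1) (1 : K)) ∈ T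
      rwa [← hSv j]
    · intro hv
      have hvmem : v ∈ Tfs := by rwa [Set.Finite.mem_toFinset]
      refine ⟨e.symm ⟨v, hvmem⟩, ?_⟩
      show Pi.single (P (e.symm ⟨v, hvmem⟩)).2
        ((MvPolynomial.monomial (P (e.symm ⟨v, hvmem⟩)).1) (1 : K)) = v
      rw [← hSv (e.symm ⟨v, hvmem⟩)]
      simp
  rw [hrange, hspanT]
  -- the leading monomial vector of g lies in L(J) = L(I)
  rw [hL]
  apply Submodule.subset_span
  exact ⟨g, hg, p, hp, rfl⟩

end B

section C
variable {n N m : ℕ}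

-- a convenient coeff-of-mul-monomial lemma
lemma coeff_mul_monomial (a : MvPowerSeries (Fin n) K) (α β : Fin n →₀ ℕ) (c : K) :
    MvPowerSeries.coeff β (a * MvPowerSeries.monomial α c) =
      if α ≤ β then MvPowerSeries.coeff (β - α) a * c else 0 := by
  classical
  rw [MvPowerSeries.coeff_mul]
  by_cases h : α ≤ β
  · rw [if_pos h]
    have hmem : ((β - α, α) : (Fin n →₀ ℕ) × (Fin n →₀ ℕ)) ∈ Finset.HasAntidiagonal.antidiagonal β := by
      rw [Finset.HasAntidiagonal.mem_antidiagonal]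
      exact tsub_add_cancel_of_le h
    rw [Finset.sum_eq_single_of_mem _ hmem]
    · rw [MvPowerSeries.coeff_monomial, if_pos rfl]
    · rintro ⟨u, v⟩ huv hne
      rw [Finset.HasAntidiagonal.mem_antidiagonal] at huv
      dsimp only at huv ⊢
      rw [MvPowerSeries.coeff_monomial]
      rcases eq_or_ne v α with hv | hv
      · exfalso
        apply hne
        have hu : u = β - α := by
          apply eq_tsub_of_add_eq
          rw [← hv]
          exact huv
        rw [hu, hv]
      · rw [if_neg hv, mul_zero]
  · rw [if_neg h]
    apply Finset.sum_eq_zero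
    rintro ⟨u, v⟩ huv
    rw [Finset.HasAntidiagonal.mem_antidiagonal] at huv
    dsimp only at huv ⊢
    rw [MvPowerSeries.coeff_monomial]
    rcases eq_or_ne v α with hv | hv
    · exfalso
      apply h
      rw [← huv, ← hv]
      exact le_add_self
    · rw [if_neg hv, mul_zero]

variable (S : Fin m → Fin N → MvPowerSeries (Fin n) K)
variable (P : Fin m → (Fin n →₀ ℕ) × Fin N)

noncomputable def lc (j : Fin m) : K := MvPowerSeries.coeff (P j).1 (S j (P j).2)

open Classical in
noncomputable def sel (p : (Fin n →₀ ℕ) × Fin N) : Option (Fin m) :=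
  if h : ∃ j, MMonDvd (P j) p then some h.choose else none

lemma sel_some {p : (Fin n →₀ ℕ) × Fin N} {j : Fin m} (h : sel P p = some j) :
    MMonDvd (P j) p := by
  classical
  by_cases hex : ∃ j', MMonDvd (P j') p
  · unfold sel at h
    rw [dif_pos hex] at h
    obtain rfl : hex.choose = j := by injection h
    exact hex.choose_spec
  · unfold sel at h
    rw [dif_neg hex] at h
    cases h

lemma sel_none {p : (Fin n →₀ ℕ) × Fin N} (h : sel P p = none) :
    ∀ j, ¬ MMonDvd (P j) p := by
  classical
  intro j hdvd
  unfold sel at h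
  rw [dif_pos ⟨j, hdvd⟩] at h
  cases h

noncomputable def aop (h : Fin N → MvPowerSeries (Fin n) K) (j : Fin m) :
    MvPowerSeries (Fin n) K :=
  fun γ => if sel P (γ + (P j).1, (P j).2) = some j then
    (lc S P j)⁻¹ * (MvPowerSeries.coeff (γ + (P j).1) (h (P j).2)) else 0

noncomputable def rop (h : Fin N → MvPowerSeries (Fin n) K) :
    Fin N → MvPowerSeries (Fin n) K :=
  fun k => fun β => if sel P (β, k) = none then MvPowerSeries.coeff β (h k) else 0

noncomputable def LT (j : Fin m) : Fin N → MvPowerSeries (Fin n) K :=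
  fun k => if k = (P j).2 then MvPowerSeries.monomial (P j).1 (lc S P j) else 0

noncomputable def Tl (j : Fin m) : Fin N → MvPowerSeries (Fin n) K :=
  fun k => LT S P j k - S j k

noncomputable def hseq (g : Fin N → MvPowerSeries (Fin n) K) :
    ℕ → (Fin N → MvPowerSeries (Fin n) K)
  | 0 => g
  | (t+1) => fun k => ∑ j, aop S P (hseq g t) j * Tl S P j k

-- basic coefficient computations
lemma coeff_aop (h : Fin N → MvPowerSeries (Fin n) K) (j : Fin m) (γ : Fin n →₀ ℕ) :
    MvPowerSeries.coeff γ (aop S P h j) =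
      if sel P (γ + (P j).1, (P j).2) = some j then
        (lc S P j)⁻¹ * (MvPowerSeries.coeff (γ + (P j).1) (h (P j).2)) else 0 := rfl

lemma coeff_rop (h : Fin N → MvPowerSeries (Fin n) K) (k : Fin N) (β : Fin n →₀ ℕ) :
    MvPowerSeries.coeff β (rop P h k) =
      if sel P (β, k) = none then MvPowerSeries.coeff β (h k) else 0 := rfl

lemma coeff_aop_mul_LT (hLM : ∀ j, IsLM (S j) (P j))
    (h : Fin N → MvPowerSeries (Fin n) K) (j : Fin m) (k : Fin N) (β : Fin n →₀ ℕ) :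
    MvPowerSeries.coeff β (aop S P h j * LT S P j k) =
      if sel P (β, k) = some j then MvPowerSeries.coeff β (h k) else 0 := by
  classical
  unfold LT
  by_cases hk : k = (P j).2
  · rw [if_pos hk, coeff_mul_monomial]
    by_cases hle : (P j).1 ≤ β
    · rw [if_pos hle, coeff_aop, tsub_add_cancel_of_le hle]
      have hswap : ((β, (P j).2) : (Fin n →₀ ℕ) × Fin N) = (β, k) := by rw [hk]
      rw [hswap]
      by_cases hsel : sel P (β, k) = some j
      · rw [if_pos hsel, if_pos hsel, hk]
        have hc : lc S P j ≠ 0 := (hLM j).1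
        field_simp
      · rw [if_neg hsel, if_neg hsel, zero_mul]
    · rw [if_neg hle]
      by_cases hsel : sel P (β, k) = some j
      · exact absurd (sel_some P hsel).2 hle
      · rw [if_neg hsel]
  · rw [if_neg hk, mul_zero, map_zero]
    by_cases hsel : sel P (β, k) = some j
    · exact absurd (sel_some P hsel).1.symm hk
    · rw [if_neg hsel]

-- (C1) decomposition
lemma decomp (hLM : ∀ j, IsLM (S j) (P j)) (h : Fin N → MvPowerSeries (Fin n) K)
    (k : Fin N) (β : Fin n →₀ ℕ) :
    MvPowerSeries.coeff β (h k) =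
      (∑ j, MvPowerSeries.coeff β (aop S P h j * LT S P j k)) +
        MvPowerSeries.coeff β (rop P h k) := by
  classical
  rcases hsel : sel P (β, k) with _ | j0
  · rw [coeff_rop, if_pos hsel]
    rw [Finset.sum_eq_zero, zero_add]
    intro j _
    rw [coeff_aop_mul_LT S P hLM, if_neg (by rw [hsel]; simp)]
  · rw [coeff_rop, if_neg (by rw [hsel]; simp), add_zero]
    rw [Finset.sum_eq_single_of_mem j0 (Finset.mem_univ _)]
    · rw [coeff_aop_mul_LT S P hLM, if_pos hsel]
    · intro j _ hj
      rw [coeff_aop_mul_LT S P hLM, if_neg (by rw [hsel]; simpa using Ne.symm hj)]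

-- tail support lemma
lemma Tl_support (hLM : ∀ j, IsLM (S j) (P j)) {j : Fin m} {k : Fin N} {v : Fin n →₀ ℕ}
    (hv : MvPowerSeries.coeff v (Tl S P j k) ≠ 0) :
    MMonGT (P j) (v, k) := by
  classical
  unfold Tl LT at hv
  by_cases hp : ((v, k) : (Fin n →₀ ℕ) × Fin N) = P j
  · exfalso
    apply hv
    have hk : k = (P j).2 := by rw [← hp]
    have hvv : v = (P j).1 := by rw [← hp]
    rw [if_pos hk, map_sub, MvPowerSeries.coeff_monomial, if_pos hvv, hvv, hk]
    show lc S P j - lc S P j = 0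
    ring
  · have hS : MvPowerSeries.coeff v (S j k) ≠ 0 := by
      intro hc
      apply hv
      by_cases hk : k = (P j).2
      · rw [if_pos hk, map_sub, MvPowerSeries.coeff_monomial, hc, sub_zero]
        rw [if_neg]
        intro hvv
        exact hp (Prod.ext hvv hk)
      · rw [if_neg hk]
        simpa using hc
    rcases (hLM j).2 (v, k) hS with he | hgt
    · exact absurd he hp
    · exact hgt

-- (C3) support rank lemma
lemma hseq_rank (hLM : ∀ j, IsLM (S j) (P j)) (g : Fin N → MvPowerSeries (Fin n) K) :
    ∀ t (p : (Fin n →₀ ℕ) × Fin N),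
      MvPowerSeries.coeff p.1 (hseq S P g t p.2) ≠ 0 → t ≤ rk p := by
  intro t
  induction t with
  | zero => exact fun p _ => Nat.zero_le _
  | succ t ih =>
    rintro ⟨β, k⟩ hcoeff
    show t + 1 ≤ rk (β, k)
    have : ∃ j, MvPowerSeries.coeff β (aop S P (hseq S P g t) j * Tl S P j k) ≠ 0 := by
      by_contra hc
      push_neg at hc
      apply hcoeff
      show MvPowerSeries.coeff β (∑ j, aop S P (hseq S P g t) j * Tl S P j k) = 0
      rw [map_sum]
      exact Finset.sum_eq_zero fun j _ => hc j
    obtain ⟨j, hj⟩ := this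
    rw [MvPowerSeries.coeff_mul] at hj
    have : ∃ uv ∈ Finset.HasAntidiagonal.antidiagonal β,
        MvPowerSeries.coeff uv.1 (aop S P (hseq S P g t) j) *
          MvPowerSeries.coeff uv.2 (Tl S P j k) ≠ 0 := by
      by_contra hc
      push_neg at hc
      exact hj (Finset.sum_eq_zero hc)
    obtain ⟨⟨u, v⟩, huv, hne⟩ := this
    rw [Finset.HasAntidiagonal.mem_antidiagonal] at huv
    have ha : MvPowerSeries.coeff u (aop S P (hseq S P g t) j) ≠ 0 := left_ne_zero_of_mul hne
    have hT : MvPowerSeries.coeff v (Tl S P j k) ≠ 0 := right_ne_zero_of_mul hne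
    have hcoeff' : MvPowerSeries.coeff (u + (P j).1) (hseq S P g t (P j).2) ≠ 0 := by
      rw [coeff_aop] at ha
      intro hc
      apply ha
      split_ifs
      · rw [hc, mul_zero]
      · rfl
    have h1 : t ≤ rk ((u + (P j).1, (P j).2) : (Fin n →₀ ℕ) × Fin N) :=
      ih (u + (P j).1, (P j).2) hcoeff'
    have h2 : MMonGT (P j) (v, k) := Tl_support S P hLM hT
    have h3 : MMonGT ((u + (P j).1, (P j).2) : (Fin n →₀ ℕ) × Fin N) (u + v, k) :=
      MMonGT.add_left u h2
    rw [huv] at h3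
    exact lt_of_le_of_lt h1 (rk_lt h3)

lemma hseq_vanish (hLM : ∀ j, IsLM (S j) (P j)) (g : Fin N → MvPowerSeries (Fin n) K)
    {t : ℕ} {p : (Fin n →₀ ℕ) × Fin N} (h : rk p < t) :
    MvPowerSeries.coeff p.1 (hseq S P g t p.2) = 0 := by
  by_contra hc
  exact absurd (hseq_rank S P hLM g t p hc) (not_le.mpr h)

noncomputable def qdiv (g : Fin N → MvPowerSeries (Fin n) K) (j : Fin m) :
    MvPowerSeries (Fin n) K :=
  fun γ => ∑ t ∈ Finset.range (rk ((γ + (P j).1, (P j).2) : (Fin n →₀ ℕ) × Fin N) + 1),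
    MvPowerSeries.coeff γ (aop S P (hseq S P g t) j)

noncomputable def rdiv (g : Fin N → MvPowerSeries (Fin n) K) :
    Fin N → MvPowerSeries (Fin n) K :=
  fun k => fun β => ∑ t ∈ Finset.range (rk ((β, k) : (Fin n →₀ ℕ) × Fin N) + 1),
    MvPowerSeries.coeff β (rop P (hseq S P g t) k)

lemma coeff_qdiv (g : Fin N → MvPowerSeries (Fin n) K) (j : Fin m) (γ : Fin n →₀ ℕ) :
    MvPowerSeries.coeff γ (qdiv S P g j) =
      ∑ t ∈ Finset.range (rk ((γ + (P j).1, (P j).2) : (Fin n →₀ ℕ) × Fin N) + 1),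
        MvPowerSeries.coeff γ (aop S P (hseq S P g t) j) := rfl

lemma coeff_rdiv (g : Fin N → MvPowerSeries (Fin n) K) (k : Fin N) (β : Fin n →₀ ℕ) :
    MvPowerSeries.coeff β (rdiv S P g k) =
      ∑ t ∈ Finset.range (rk ((β, k) : (Fin n →₀ ℕ) × Fin N) + 1),
        MvPowerSeries.coeff β (rop P (hseq S P g t) k) := rfl

lemma aop_vanish (hLM : ∀ j, IsLM (S j) (P j)) (g : Fin N → MvPowerSeries (Fin n) K)
    {t : ℕ} {j : Fin m} {γ : Fin n →₀ ℕ}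
    (h : rk ((γ + (P j).1, (P j).2) : (Fin n →₀ ℕ) × Fin N) < t) :
    MvPowerSeries.coeff γ (aop S P (hseq S P g t) j) = 0 := by
  rw [coeff_aop]
  split_ifs
  · rw [hseq_vanish S P hLM g h, mul_zero]
  · rfl

lemma coeff_qdiv_ext (hLM : ∀ j, IsLM (S j) (P j)) (g : Fin N → MvPowerSeries (Fin n) K)
    (j : Fin m) (γ : Fin n →₀ ℕ) {Tb : ℕ}
    (hT : rk ((γ + (P j).1, (P j).2) : (Fin n →₀ ℕ) × Fin N) + 1 ≤ Tb) :
    MvPowerSeries.coeff γ (qdiv S P g j) =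
      ∑ t ∈ Finset.range Tb, MvPowerSeries.coeff γ (aop S P (hseq S P g t) j) := by
  rw [coeff_qdiv]
  apply Finset.sum_subset (Finset.range_subset_range.mpr hT)
  intro t _ ht
  rw [Finset.mem_range, not_lt] at ht
  exact aop_vanish S P hLM g (by omega)

-- (C6) the division identity
lemma division_identity (hLM : ∀ j, IsLM (S j) (P j)) (g : Fin N → MvPowerSeries (Fin n) K) :
    g = (fun k => ∑ j, qdiv S P g j * S j k) + rdiv S P g := by
  classical
  funext k
  apply MvPowerSeries.ext
  intro β
  set R := rk ((β, k) : (Fin n →₀ ℕ) × Fin N) with hR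
  have step1 : ∀ j, MvPowerSeries.coeff β (qdiv S P g j * S j k) =
      ∑ t ∈ Finset.range (R + 1),
        MvPowerSeries.coeff β (aop S P (hseq S P g t) j * S j k) := by
    intro j
    rw [MvPowerSeries.coeff_mul]
    have hterm : ∀ uv ∈ Finset.HasAntidiagonal.antidiagonal β,
        MvPowerSeries.coeff uv.1 (qdiv S P g j) * MvPowerSeries.coeff uv.2 (S j k) =
        ∑ t ∈ Finset.range (R + 1),
          MvPowerSeries.coeff uv.1 (aop S P (hseq S P g t) j) *
            MvPowerSeries.coeff uv.2 (S j k) := by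
      rintro ⟨u, v⟩ huv
      rw [Finset.HasAntidiagonal.mem_antidiagonal] at huv
      dsimp only at huv ⊢
      by_cases hSv : MvPowerSeries.coeff v (S j k) = 0
      · rw [hSv, mul_zero]
        symm
        apply Finset.sum_eq_zero
        intro t _
        exact mul_zero _
      · have hcases := (hLM j).2 (v, k) hSv
        have hrk : rk ((u + (P j).1, (P j).2) : (Fin n →₀ ℕ) × Fin N) + 1 ≤ R + 1 := by
          rcases hcases with he | hgt
          · have hpair : ((u + (P j).1, (P j).2) : (Fin n →₀ ℕ) × Fin N) = (β, k) := by
              have h1 : (P j).1 = v := by rw [← he]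
              have h2 : (P j).2 = k := by rw [← he]
              rw [h1, h2, huv]
            rw [hpair]
          · have h3 := MMonGT.add_left (p := (P j)) (q := (v, k)) u hgt
            rw [huv] at h3
            exact Nat.succ_le_succ (le_of_lt (rk_lt h3))
        rw [coeff_qdiv_ext S P hLM g j u hrk, Finset.sum_mul]
    calc ∑ uv ∈ Finset.HasAntidiagonal.antidiagonal β,
          MvPowerSeries.coeff uv.1 (qdiv S P g j) * MvPowerSeries.coeff uv.2 (S j k)
        = ∑ uv ∈ Finset.HasAntidiagonal.antidiagonal β, ∑ t ∈ Finset.range (R + 1),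
            MvPowerSeries.coeff uv.1 (aop S P (hseq S P g t) j) *
              MvPowerSeries.coeff uv.2 (S j k) := Finset.sum_congr rfl hterm
      _ = ∑ t ∈ Finset.range (R + 1), ∑ uv ∈ Finset.HasAntidiagonal.antidiagonal β,
            MvPowerSeries.coeff uv.1 (aop S P (hseq S P g t) j) *
              MvPowerSeries.coeff uv.2 (S j k) := Finset.sum_comm
      _ = ∑ t ∈ Finset.range (R + 1),
            MvPowerSeries.coeff β (aop S P (hseq S P g t) j * S j k) := by
          apply Finset.sum_congr rfl
          intro t _
          rw [MvPowerSeries.coeff_mul]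
  have step3 : ∀ t, (∑ j, MvPowerSeries.coeff β (aop S P (hseq S P g t) j * S j k)) +
      MvPowerSeries.coeff β (rop P (hseq S P g t) k) =
      MvPowerSeries.coeff β (hseq S P g t k) -
        MvPowerSeries.coeff β (hseq S P g (t+1) k) := by
    intro t
    have hS_eq : ∀ j, S j k = LT S P j k - Tl S P j k := by
      intro j
      unfold Tl
      ring
    have hsum : ∀ j, MvPowerSeries.coeff β (aop S P (hseq S P g t) j * S j k) =
        MvPowerSeries.coeff β (aop S P (hseq S P g t) j * LT S P j k) -
          MvPowerSeries.coeff β (aop S P (hseq S P g t) j * Tl S P j k) := by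
      intro j
      conv_lhs => rw [hS_eq j]
      rw [mul_sub, map_sub]
    rw [Finset.sum_congr rfl (fun j _ => hsum j), Finset.sum_sub_distrib]
    have hnext : MvPowerSeries.coeff β (hseq S P g (t+1) k) =
        ∑ j, MvPowerSeries.coeff β (aop S P (hseq S P g t) j * Tl S P j k) := by
      show MvPowerSeries.coeff β (∑ j, aop S P (hseq S P g t) j * Tl S P j k) = _
      rw [map_sum]
    have hdec := decomp S P hLM (hseq S P g t) k β
    rw [hdec, hnext]
    ring
  have hrhs : MvPowerSeries.coeff β
      (((fun k => ∑ j, qdiv S P g j * S j k) + rdiv S P g) k) =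
      (∑ j, MvPowerSeries.coeff β (qdiv S P g j * S j k)) +
        MvPowerSeries.coeff β (rdiv S P g k) := by
    rw [Pi.add_apply, map_add, map_sum]
  rw [hrhs]
  calc MvPowerSeries.coeff β (g k)
      = MvPowerSeries.coeff β (hseq S P g 0 k) -
          MvPowerSeries.coeff β (hseq S P g (R+1) k) := by
        have hv : MvPowerSeries.coeff β (hseq S P g (R+1) k) = 0 :=
          hseq_vanish S P hLM g (p := (β, k)) (by omega)
        rw [hv, sub_zero]
        rfl
    _ = ∑ t ∈ Finset.range (R+1),
          (MvPowerSeries.coeff β (hseq S P g t k) -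
            MvPowerSeries.coeff β (hseq S P g (t+1) k)) :=
        (Finset.sum_range_sub' (fun t => MvPowerSeries.coeff β (hseq S P g t k)) (R+1)).symm
    _ = ∑ t ∈ Finset.range (R+1),
          ((∑ j, MvPowerSeries.coeff β (aop S P (hseq S P g t) j * S j k)) +
            MvPowerSeries.coeff β (rop P (hseq S P g t) k)) := by
        apply Finset.sum_congr rfl
        intro t _
        rw [step3 t]
    _ = (∑ t ∈ Finset.range (R+1),
          ∑ j, MvPowerSeries.coeff β (aop S P (hseq S P g t) j * S j k)) +
          ∑ t ∈ Finset.range (R+1),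
            MvPowerSeries.coeff β (rop P (hseq S P g t) k) :=
        Finset.sum_add_distrib
    _ = (∑ j, MvPowerSeries.coeff β (qdiv S P g j * S j k)) +
        MvPowerSeries.coeff β (rdiv S P g k) := by
      rw [Finset.sum_comm]
      rw [coeff_rdiv]
      congr 1
      apply Finset.sum_congr rfl
      intro j _
      rw [step1 j]

-- (C7) remainder property
lemma rdiv_remainder (hLM : ∀ j, IsLM (S j) (P j)) (g : Fin N → MvPowerSeries (Fin n) K)
    {k : Fin N} {β : Fin n →₀ ℕ} (h : MvPowerSeries.coeff β (rdiv S P g k) ≠ 0) :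
    ∀ j, ¬ MMonDvd (P j) ((β, k) : (Fin n →₀ ℕ) × Fin N) := by
  have : ∃ t ∈ Finset.range (rk ((β, k) : (Fin n →₀ ℕ) × Fin N) + 1),
      MvPowerSeries.coeff β (rop P (hseq S P g t) k) ≠ 0 := by
    by_contra hc
    push_neg at hc
    exact h (by rw [coeff_rdiv]; exact Finset.sum_eq_zero hc)
  obtain ⟨t, _, ht⟩ := this
  rw [coeff_rop] at ht
  by_cases hsel : sel P ((β, k) : (Fin n →₀ ℕ) × Fin N) = none
  · exact sel_none P hsel
  · rw [if_neg hsel] at ht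
    exact absurd rfl ht

end C

section D
variable {n N m : ℕ}
variable (abv : AbsoluteValue K ℝ)

noncomputable def An (c : K) : ℝ≥0∞ := ENNReal.ofReal (abv c)

lemma An_zero : An abv (0 : K) = 0 := by simp [An]
lemma An_ne_top (c : K) : An abv c ≠ ⊤ := ofReal_ne_top
lemma An_pos {c : K} (hc : c ≠ 0) : 0 < An abv c := by
  rw [An, ENNReal.ofReal_pos]
  exact abv.pos hc
lemma An_add_le (x y : K) : An abv (x + y) ≤ An abv x + An abv y := by
  rw [An, An, An, ← ENNReal.ofReal_add (abv.nonneg x) (abv.nonneg y)]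
  exact ENNReal.ofReal_le_ofReal (abv.add_le x y)
lemma An_mul (x y : K) : An abv (x * y) = An abv x * An abv y := by
  rw [An, An, An, abv.map_mul, ENNReal.ofReal_mul (abv.nonneg x)]
lemma An_sum_le {ι : Type} (s : Finset ι) (f : ι → K) :
    An abv (∑ i ∈ s, f i) ≤ ∑ i ∈ s, An abv (f i) := by
  classical
  induction s using Finset.induction_on with
  | empty => simp [An_zero]
  | @insert a s ha ih =>
    rw [Finset.sum_insert ha, Finset.sum_insert ha]
    exact le_trans (An_add_le abv _ _) (add_le_add_right ih _)
lemma An_inv_mul (c x : K) (hc : c ≠ 0) :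
    An abv (c⁻¹ * x) = (An abv c)⁻¹ * An abv x := by
  have h1 : An abv c * An abv (c⁻¹) = 1 := by
    rw [← An_mul, mul_inv_cancel₀ hc]
    simp [An]
  have h2 : An abv (c⁻¹) = (An abv c)⁻¹ :=
    ENNReal.eq_inv_of_mul_eq_one_left (by rw [mul_comm]; exact h1)
  rw [An_mul, h2]

variable (ε : Fin n → ℝ≥0∞) (lam : ℝ≥0∞)

noncomputable def wE (β : Fin n →₀ ℕ) : ℝ≥0∞ := ∏ i, ε i ^ β i

lemma wE_add (a b : Fin n →₀ ℕ) : wE ε (a + b) = wE ε a * wE ε b := by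
  rw [wE, wE, wE, ← Finset.prod_mul_distrib]
  apply Finset.prod_congr rfl
  intro i _
  rw [Finsupp.add_apply, pow_add]

lemma wE_ne_top (hε : ∀ i, ε i ≠ ⊤) (β : Fin n →₀ ℕ) : wE ε β ≠ ⊤ := by
  rw [wE]
  exact (ENNReal.prod_lt_top (fun i _ => (ENNReal.pow_lt_top (hε i).lt_top))).ne

lemma wE_ne_zero (hε : ∀ i, ε i ≠ 0) (β : Fin n →₀ ℕ) : wE ε β ≠ 0 := by
  rw [wE, Finset.prod_ne_zero_iff]
  exact fun i _ => pow_ne_zero _ (hε i)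

noncomputable def nE (f : MvPowerSeries (Fin n) K) : ℝ≥0∞ :=
  ∑' β : Fin n →₀ ℕ, An abv (MvPowerSeries.coeff β f) * wE ε β

noncomputable def nV (h : Fin N → MvPowerSeries (Fin n) K) : ℝ≥0∞ :=
  ∑ k : Fin N, lam ^ (k : ℕ) * nE abv ε (h k)

-- regrouping over the antidiagonal
lemma tsum_antidiagonal (F : ((Fin n →₀ ℕ) × (Fin n →₀ ℕ)) → ℝ≥0∞) :
    ∑' β : Fin n →₀ ℕ, (∑ uv ∈ Finset.HasAntidiagonal.antidiagonal β, F uv) =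
      ∑' uv : (Fin n →₀ ℕ) × (Fin n →₀ ℕ), F uv := by
  classical
  have h1 : ∀ β : Fin n →₀ ℕ, (∑ uv ∈ Finset.HasAntidiagonal.antidiagonal β, F uv) =
      ∑' uv : (Fin n →₀ ℕ) × (Fin n →₀ ℕ), (if uv.1 + uv.2 = β then F uv else 0) := by
    intro β
    rw [tsum_eq_sum (s := Finset.HasAntidiagonal.antidiagonal β)
      (fun uv huv => if_neg (fun hc => huv (Finset.HasAntidiagonal.mem_antidiagonal.mpr hc)))]
    apply Finset.sum_congr rfl
    intro uv huv
    rw [if_pos (Finset.HasAntidiagonal.mem_antidiagonal.mp huv)]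
  rw [tsum_congr h1, ENNReal.tsum_comm]
  apply tsum_congr
  intro uv
  rw [show (fun β => if uv.1 + uv.2 = β then F uv else 0) =
      (fun β => if β = uv.1 + uv.2 then F uv else 0) from funext fun β => by simp [eq_comm]]
  exact tsum_ite_eq _ _

-- submultiplicativity
lemma nE_mul_le (f g : MvPowerSeries (Fin n) K) :
    nE abv ε (f * g) ≤ nE abv ε f * nE abv ε g := by
  classical
  calc nE abv ε (f * g)
      ≤ ∑' β : Fin n →₀ ℕ, (∑ uv ∈ Finset.HasAntidiagonal.antidiagonal β,
          An abv (MvPowerSeries.coeff uv.1 f) * An abv (MvPowerSeries.coeff uv.2 g)) *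
            wE ε β := by
        apply ENNReal.tsum_le_tsum
        intro β
        apply mul_le_mul_left
        rw [MvPowerSeries.coeff_mul]
        exact le_trans (An_sum_le abv _ _) (by
          apply Finset.sum_le_sum
          intro uv _
          rw [An_mul])
    _ = ∑' β : Fin n →₀ ℕ, (∑ uv ∈ Finset.HasAntidiagonal.antidiagonal β,
          (An abv (MvPowerSeries.coeff uv.1 f) * wE ε uv.1) *
            (An abv (MvPowerSeries.coeff uv.2 g) * wE ε uv.2)) := by
        apply tsum_congr
        intro β
        rw [Finset.sum_mul]
        apply Finset.sum_congr rfl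
        intro uv huv
        rw [← Finset.HasAntidiagonal.mem_antidiagonal.mp huv, wE_add]
        ring
    _ = ∑' uv : (Fin n →₀ ℕ) × (Fin n →₀ ℕ),
          (An abv (MvPowerSeries.coeff uv.1 f) * wE ε uv.1) *
            (An abv (MvPowerSeries.coeff uv.2 g) * wE ε uv.2) := tsum_antidiagonal _
    _ = nE abv ε f * nE abv ε g := by
        rw [ENNReal.tsum_prod']
        rw [nE, nE, ← ENNReal.tsum_mul_right]
        apply tsum_congr
        intro u
        rw [← ENNReal.tsum_mul_left]

-- triangle inequalities
lemma nE_add_le (f g : MvPowerSeries (Fin n) K) :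
    nE abv ε (f + g) ≤ nE abv ε f + nE abv ε g := by
  rw [nE, nE, nE, ← ENNReal.tsum_add]
  apply ENNReal.tsum_le_tsum
  intro β
  rw [map_add, ← add_mul]
  exact mul_le_mul_left (An_add_le abv _ _) _

lemma nE_sum_le {ι : Type} (s : Finset ι) (f : ι → MvPowerSeries (Fin n) K) :
    nE abv ε (∑ i ∈ s, f i) ≤ ∑ i ∈ s, nE abv ε (f i) := by
  classical
  induction s using Finset.induction_on with
  | empty => simp [nE, An_zero]
  | @insert a s ha ih =>
    rw [Finset.sum_insert ha, Finset.sum_insert ha]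
    exact le_trans (nE_add_le abv ε _ _) (add_le_add_right ih _)

lemma nV_sum_le {ι : Type} (s : Finset ι) (f : ι → Fin N → MvPowerSeries (Fin n) K) :
    nV abv ε lam (fun k => ∑ i ∈ s, f i k) ≤ ∑ i ∈ s, nV abv ε lam (f i) := by
  rw [nV]
  calc ∑ k : Fin N, lam ^ (k:ℕ) * nE abv ε (∑ i ∈ s, f i k)
      ≤ ∑ k : Fin N, lam ^ (k:ℕ) * ∑ i ∈ s, nE abv ε (f i k) :=
        Finset.sum_le_sum (fun k _ => mul_le_mul_right (nE_sum_le abv ε s (fun i => f i k)) _)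
    _ = ∑ k : Fin N, ∑ i ∈ s, lam ^ (k:ℕ) * nE abv ε (f i k) := by
        apply Finset.sum_congr rfl
        intro k _
        rw [Finset.mul_sum]
    _ = ∑ i ∈ s, ∑ k : Fin N, lam ^ (k:ℕ) * nE abv ε (f i k) := Finset.sum_comm
    _ = ∑ i ∈ s, nV abv ε lam (f i) := rfl

lemma nV_smul_le (a : MvPowerSeries (Fin n) K) (u : Fin N → MvPowerSeries (Fin n) K) :
    nV abv ε lam (fun k => a * u k) ≤ nE abv ε a * nV abv ε lam u := by
  rw [nV, nV, Finset.mul_sum]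
  apply Finset.sum_le_sum
  intro k _
  calc lam ^ (k:ℕ) * nE abv ε (a * u k) ≤ lam ^ (k:ℕ) * (nE abv ε a * nE abv ε (u k)) :=
        mul_le_mul_right (nE_mul_le abv ε a (u k)) _
    _ = nE abv ε a * (lam ^ (k:ℕ) * nE abv ε (u k)) := by ring

variable (S : Fin m → Fin N → MvPowerSeries (Fin n) K)
variable (P : Fin m → (Fin n →₀ ℕ) × Fin N)

-- ### estimates
noncomputable def CE (j : Fin m) : ℝ≥0∞ :=
  An abv (lc S P j) * wE ε (P j).1 * lam ^ (((P j).2 : Fin N) : ℕ)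

lemma CE_ne_zero {j : Fin m} (hlc : lc S P j ≠ 0) (hε : ∀ i, ε i ≠ 0) (hlam : lam ≠ 0) :
    CE abv ε lam S P j ≠ 0 := by
  rw [CE]
  apply mul_ne_zero (mul_ne_zero (An_pos abv hlc).ne' (wE_ne_zero ε hε _)) (pow_ne_zero _ hlam)

lemma CE_ne_top {j : Fin m} (hε : ∀ i, ε i ≠ ⊤) (hlam : lam ≠ ⊤) :
    CE abv ε lam S P j ≠ ⊤ := by
  rw [CE]
  exact (ENNReal.mul_lt_top
    (ENNReal.mul_lt_top (An_ne_top abv _).lt_top (wE_ne_top ε hε _).lt_top)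
    (ENNReal.pow_lt_top hlam.lt_top)).ne

lemma aop_estimate {j : Fin m} (hlc : lc S P j ≠ 0)
    (h : Fin N → MvPowerSeries (Fin n) K) :
    CE abv ε lam S P j * nE abv ε (aop S P h j) ≤ nV abv ε lam h := by
  have hco : ∀ γ : Fin n →₀ ℕ, An abv (MvPowerSeries.coeff γ (aop S P h j)) ≤
      (An abv (lc S P j))⁻¹ * An abv (MvPowerSeries.coeff (γ + (P j).1) (h (P j).2)) := by
    intro γ
    show An abv (if sel P (γ + (P j).1, (P j).2) = some j then
      (lc S P j)⁻¹ * (MvPowerSeries.coeff (γ + (P j).1) (h (P j).2)) else 0) ≤ _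
    split_ifs
    · rw [An_inv_mul abv _ _ hlc]
    · rw [An_zero]
      exact zero_le
  have hmain : CE abv ε lam S P j * nE abv ε (aop S P h j) ≤
      lam ^ (((P j).2 : Fin N) : ℕ) * nE abv ε (h (P j).2) := by
    calc CE abv ε lam S P j * nE abv ε (aop S P h j)
        ≤ CE abv ε lam S P j * ∑' γ : Fin n →₀ ℕ,
            (An abv (lc S P j))⁻¹ *
              An abv (MvPowerSeries.coeff (γ + (P j).1) (h (P j).2)) * wE ε γ := by
          apply mul_le_mul_right
          exact ENNReal.tsum_le_tsum (fun γ => mul_le_mul_left (hco γ) _)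
      _ = ∑' γ : Fin n →₀ ℕ, lam ^ (((P j).2 : Fin N) : ℕ) *
            (An abv (MvPowerSeries.coeff (γ + (P j).1) (h (P j).2)) * wE ε (γ + (P j).1)) := by
          rw [← ENNReal.tsum_mul_left]
          apply tsum_congr
          intro γ
          rw [CE, wE_add]
          have hcan : An abv (lc S P j) * (An abv (lc S P j))⁻¹ = 1 :=
            ENNReal.mul_inv_cancel (An_pos abv hlc).ne' (An_ne_top abv _)
          calc An abv (lc S P j) * wE ε (P j).1 * lam ^ (((P j).2 : Fin N) : ℕ) *
                ((An abv (lc S P j))⁻¹ *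
                  An abv (MvPowerSeries.coeff (γ + (P j).1) (h (P j).2)) * wE ε γ)
              = (An abv (lc S P j) * (An abv (lc S P j))⁻¹) * (lam ^ (((P j).2 : Fin N) : ℕ) *
                  (An abv (MvPowerSeries.coeff (γ + (P j).1) (h (P j).2)) *
                    (wE ε γ * wE ε (P j).1))) := by ring
            _ = lam ^ (((P j).2 : Fin N) : ℕ) *
                  (An abv (MvPowerSeries.coeff (γ + (P j).1) (h (P j).2)) *
                    (wE ε γ * wE ε (P j).1)) := by rw [hcan, one_mul]
      _ ≤ lam ^ (((P j).2 : Fin N) : ℕ) * nE abv ε (h (P j).2) := by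
          rw [ENNReal.tsum_mul_left]
          apply mul_le_mul_right
          exact tsum_comp_le_tsum_of_injective (add_left_injective (P j).1)
            (fun δ => An abv (MvPowerSeries.coeff δ (h (P j).2)) * wE ε δ)
  exact le_trans hmain (Finset.single_le_sum
    (f := fun k : Fin N => lam ^ (k : ℕ) * nE abv ε (h k)) (fun k _ => zero_le)
    (Finset.mem_univ (P j).2))

lemma rop_estimate (h : Fin N → MvPowerSeries (Fin n) K) :
    nV abv ε lam (rop P h) ≤ nV abv ε lam h := by
  apply Finset.sum_le_sum
  intro k _
  apply mul_le_mul_right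
  apply ENNReal.tsum_le_tsum
  intro β
  apply mul_le_mul_left
  show An abv (if sel P (β, k) = none then MvPowerSeries.coeff β (h k) else 0) ≤ _
  split_ifs
  · exact le_refl _
  · rw [An_zero]; exact zero_le

lemma nE_zero : nE abv ε (0 : MvPowerSeries (Fin n) K) = 0 := by
  rw [nE]
  simp [An_zero]

lemma hseq_decay (hlc : ∀ j, lc S P j ≠ 0)
    (HT : ∀ j, nV abv ε lam (Tl S P j) * (2 * m) ≤ CE abv ε lam S P j)
    (g : Fin N → MvPowerSeries (Fin n) K) (t : ℕ) :
    nV abv ε lam (hseq S P g (t+1)) * 2 ≤ nV abv ε lam (hseq S P g t) := by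
  rcases Nat.eq_zero_or_pos m with hm | hm
  · subst hm
    have : nV abv ε lam (hseq S P g (t+1)) = 0 := by
      show nV abv ε lam (fun k => ∑ j : Fin 0, aop S P (hseq S P g t) j * Tl S P j k) = 0
      have h0 : (fun k => ∑ j : Fin 0, aop S P (hseq S P g t) j * Tl S P j k) =
          (fun _ : Fin N => (0 : MvPowerSeries (Fin n) K)) := by
        funext k
        simp
      rw [h0, nV]
      simp [nE_zero]
    rw [this, zero_mul]
    exact zero_le
  · set h := hseq S P g t with hh
    have step1 : nV abv ε lam (hseq S P g (t+1)) ≤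
        ∑ j : Fin m, nE abv ε (aop S P h j) * nV abv ε lam (Tl S P j) := by
      calc nV abv ε lam (hseq S P g (t+1))
          ≤ ∑ j : Fin m, nV abv ε lam (fun k => aop S P h j * Tl S P j k) :=
            nV_sum_le abv ε lam Finset.univ (fun j k => aop S P h j * Tl S P j k)
        _ ≤ ∑ j : Fin m, nE abv ε (aop S P h j) * nV abv ε lam (Tl S P j) :=
            Finset.sum_le_sum (fun j _ => nV_smul_le abv ε lam _ _)
    have step2 : (∑ j : Fin m, nE abv ε (aop S P h j) * nV abv ε lam (Tl S P j)) * (2 * m) ≤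
        (m : ℝ≥0∞) * nV abv ε lam h := by
      rw [Finset.sum_mul]
      calc ∑ j : Fin m, nE abv ε (aop S P h j) * nV abv ε lam (Tl S P j) * (2 * m)
          ≤ ∑ j : Fin m, nV abv ε lam h := by
            apply Finset.sum_le_sum
            intro j _
            calc nE abv ε (aop S P h j) * nV abv ε lam (Tl S P j) * (2 * m)
                = nE abv ε (aop S P h j) * (nV abv ε lam (Tl S P j) * (2 * m)) := by ring
              _ ≤ nE abv ε (aop S P h j) * CE abv ε lam S P j :=
                  mul_le_mul_right (HT j) _
              _ = CE abv ε lam S P j * nE abv ε (aop S P h j) := by ring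
              _ ≤ nV abv ε lam h := aop_estimate abv ε lam S P (hlc j) h
        _ = (m : ℝ≥0∞) * nV abv ε lam h := by
            rw [Finset.sum_const, Finset.card_univ, Fintype.card_fin, nsmul_eq_mul]
    have hm' : ((m : ℝ≥0∞)) ≠ 0 := Nat.cast_ne_zero.mpr hm.ne'
    have hmt : ((m : ℝ≥0∞)) ≠ ⊤ := natCast_ne_top m
    have step3 : (nV abv ε lam (hseq S P g (t+1)) * 2) * m ≤ (nV abv ε lam h) * m := by
      calc (nV abv ε lam (hseq S P g (t+1)) * 2) * m
          = nV abv ε lam (hseq S P g (t+1)) * (2 * m) := by ring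
        _ ≤ (∑ j : Fin m, nE abv ε (aop S P h j) * nV abv ε lam (Tl S P j)) * (2 * m) :=
            mul_le_mul_left step1 _
        _ ≤ (m : ℝ≥0∞) * nV abv ε lam h := step2
        _ = nV abv ε lam h * m := by ring
    exact (ENNReal.mul_le_mul_iff_left hm' hmt).mp step3

lemma hseq_geom (hlc : ∀ j, lc S P j ≠ 0)
    (HT : ∀ j, nV abv ε lam (Tl S P j) * (2 * m) ≤ CE abv ε lam S P j)
    (g : Fin N → MvPowerSeries (Fin n) K) :
    ∀ t, nV abv ε lam (hseq S P g t) ≤ nV abv ε lam g * 2⁻¹ ^ t := by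
  intro t
  induction t with
  | zero => simp [hseq]
  | succ t ih =>
    have hd := hseq_decay abv ε lam S P hlc HT g t
    have h1 : nV abv ε lam (hseq S P g (t+1)) ≤ nV abv ε lam (hseq S P g t) * 2⁻¹ := by
      calc nV abv ε lam (hseq S P g (t+1))
          = nV abv ε lam (hseq S P g (t+1)) * 2 * 2⁻¹ := by
            rw [mul_assoc, ENNReal.mul_inv_cancel two_ne_zero (by norm_num), mul_one]
        _ ≤ nV abv ε lam (hseq S P g t) * 2⁻¹ := mul_le_mul_left hd _
    calc nV abv ε lam (hseq S P g (t+1)) ≤ nV abv ε lam (hseq S P g t) * 2⁻¹ := h1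
      _ ≤ nV abv ε lam g * 2⁻¹ ^ t * 2⁻¹ := mul_le_mul_left ih _
      _ = nV abv ε lam g * 2⁻¹ ^ (t+1) := by rw [mul_assoc, pow_succ]

lemma hseq_tsum (hlc : ∀ j, lc S P j ≠ 0)
    (HT : ∀ j, nV abv ε lam (Tl S P j) * (2 * m) ≤ CE abv ε lam S P j)
    (g : Fin N → MvPowerSeries (Fin n) K) :
    ∑' t : ℕ, nV abv ε lam (hseq S P g t) ≤ nV abv ε lam g * 2 := by
  calc ∑' t : ℕ, nV abv ε lam (hseq S P g t)
      ≤ ∑' t : ℕ, nV abv ε lam g * 2⁻¹ ^ t :=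
        ENNReal.tsum_le_tsum (hseq_geom abv ε lam S P hlc HT g)
    _ = nV abv ε lam g * (1 - 2⁻¹)⁻¹ := by rw [ENNReal.tsum_mul_left, ENNReal.tsum_geometric]
    _ = nV abv ε lam g * 2 := by rw [ENNReal.one_sub_inv_two, inv_inv]

lemma qdiv_estimate (hlc : ∀ j, lc S P j ≠ 0)
    (HT : ∀ j, nV abv ε lam (Tl S P j) * (2 * m) ≤ CE abv ε lam S P j)
    (g : Fin N → MvPowerSeries (Fin n) K) (j : Fin m) :
    CE abv ε lam S P j * nE abv ε (qdiv S P g j) ≤ nV abv ε lam g * 2 := by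
  have h1 : nE abv ε (qdiv S P g j) ≤ ∑' t : ℕ, nE abv ε (aop S P (hseq S P g t) j) := by
    calc nE abv ε (qdiv S P g j)
        ≤ ∑' γ : Fin n →₀ ℕ, (∑' t : ℕ,
            An abv (MvPowerSeries.coeff γ (aop S P (hseq S P g t) j))) * wE ε γ := by
          apply ENNReal.tsum_le_tsum
          intro γ
          apply mul_le_mul_left
          calc An abv (MvPowerSeries.coeff γ (qdiv S P g j))
              ≤ ∑ t ∈ Finset.range (rk ((γ + (P j).1, (P j).2) : (Fin n →₀ ℕ) × Fin N) + 1),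
                  An abv (MvPowerSeries.coeff γ (aop S P (hseq S P g t) j)) :=
                An_sum_le abv _ _
            _ ≤ ∑' t : ℕ, An abv (MvPowerSeries.coeff γ (aop S P (hseq S P g t) j)) :=
                ENNReal.sum_le_tsum _
      _ = ∑' γ : Fin n →₀ ℕ, ∑' t : ℕ,
            An abv (MvPowerSeries.coeff γ (aop S P (hseq S P g t) j)) * wE ε γ := by
          apply tsum_congr
          intro γ
          rw [ENNReal.tsum_mul_right]
      _ = ∑' t : ℕ, nE abv ε (aop S P (hseq S P g t) j) := ENNReal.tsum_comm
  calc CE abv ε lam S P j * nE abv ε (qdiv S P g j)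
      ≤ CE abv ε lam S P j * ∑' t : ℕ, nE abv ε (aop S P (hseq S P g t) j) :=
        mul_le_mul_right h1 _
    _ = ∑' t : ℕ, CE abv ε lam S P j * nE abv ε (aop S P (hseq S P g t) j) :=
        (ENNReal.tsum_mul_left).symm
    _ ≤ ∑' t : ℕ, nV abv ε lam (hseq S P g t) :=
        ENNReal.tsum_le_tsum (fun t => aop_estimate abv ε lam S P (hlc j) _)
    _ ≤ nV abv ε lam g * 2 := hseq_tsum abv ε lam S P hlc HT g

lemma rdiv_estimate (hlc : ∀ j, lc S P j ≠ 0)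
    (HT : ∀ j, nV abv ε lam (Tl S P j) * (2 * m) ≤ CE abv ε lam S P j)
    (g : Fin N → MvPowerSeries (Fin n) K) :
    nV abv ε lam (rdiv S P g) ≤ nV abv ε lam g * 2 := by
  have h1 : ∀ k : Fin N, nE abv ε (rdiv S P g k) ≤
      ∑' t : ℕ, nE abv ε (rop P (hseq S P g t) k) := by
    intro k
    calc nE abv ε (rdiv S P g k)
        ≤ ∑' β : Fin n →₀ ℕ, (∑' t : ℕ,
            An abv (MvPowerSeries.coeff β (rop P (hseq S P g t) k))) * wE ε β := by
          apply ENNReal.tsum_le_tsum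
          intro β
          apply mul_le_mul_left
          calc An abv (MvPowerSeries.coeff β (rdiv S P g k))
              ≤ ∑ t ∈ Finset.range (rk ((β, k) : (Fin n →₀ ℕ) × Fin N) + 1),
                  An abv (MvPowerSeries.coeff β (rop P (hseq S P g t) k)) :=
                An_sum_le abv _ _
            _ ≤ ∑' t : ℕ, An abv (MvPowerSeries.coeff β (rop P (hseq S P g t) k)) :=
                ENNReal.sum_le_tsum _
      _ = ∑' β : Fin n →₀ ℕ, ∑' t : ℕ,
            An abv (MvPowerSeries.coeff β (rop P (hseq S P g t) k)) * wE ε β := by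
          apply tsum_congr
          intro β
          rw [ENNReal.tsum_mul_right]
      _ = ∑' t : ℕ, nE abv ε (rop P (hseq S P g t) k) := ENNReal.tsum_comm
  calc nV abv ε lam (rdiv S P g)
      ≤ ∑ k : Fin N, lam ^ (k : ℕ) * ∑' t : ℕ, nE abv ε (rop P (hseq S P g t) k) :=
        Finset.sum_le_sum (fun k _ => mul_le_mul_right (h1 k) _)
    _ = ∑ k : Fin N, ∑' t : ℕ, lam ^ (k : ℕ) * nE abv ε (rop P (hseq S P g t) k) := by
        apply Finset.sum_congr rfl
        intro k _
        rw [ENNReal.tsum_mul_left]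
    _ = ∑' t : ℕ, ∑ k : Fin N, lam ^ (k : ℕ) * nE abv ε (rop P (hseq S P g t) k) :=
        (Summable.tsum_finsetSum (fun k _ => ENNReal.summable)).symm
    _ = ∑' t : ℕ, nV abv ε lam (rop P (hseq S P g t)) := rfl
    _ ≤ ∑' t : ℕ, nV abv ε lam (hseq S P g t) :=
        ENNReal.tsum_le_tsum (fun t => rop_estimate abv ε lam P _)
    _ ≤ nV abv ε lam g * 2 := hseq_tsum abv ε lam S P hlc HT g

end D

section E
variable {n N : ℕ}
variable (abv : AbsoluteValue K ℝ)

lemma wnorm_eq_nE (εr : Fin n → ℝ) (hεr : ∀ i, 0 ≤ εr i) (f : MvPowerSeries (Fin n) K) :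
    wnorm abv εr f = nE abv (fun i => ENNReal.ofReal (εr i)) f := by
  apply tsum_congr
  intro β
  rw [ENNReal.ofReal_mul (abv.nonneg _)]
  congr 1
  rw [wE, ENNReal.ofReal_prod_of_nonneg (fun (i : Fin n) _ => pow_nonneg (hεr i) (β i))]
  apply Finset.prod_congr rfl
  intro i _
  rw [ENNReal.ofReal_pow (hεr i)]

lemma wE_mono {ε ε' : Fin n → ℝ≥0∞} (h : ∀ i, ε i ≤ ε' i) (β : Fin n →₀ ℕ) :
    wE ε β ≤ wE ε' β :=
  Finset.prod_le_prod' (fun i _ => pow_le_pow_left' (h i) _)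

lemma nE_mono {ε ε' : Fin n → ℝ≥0∞} (h : ∀ i, ε i ≤ ε' i) (f : MvPowerSeries (Fin n) K) :
    nE abv ε f ≤ nE abv ε' f :=
  ENNReal.tsum_le_tsum (fun β => mul_le_mul_right (wE_mono h β) _)

lemma wE_le_one {ε : Fin n → ℝ≥0∞} (h : ∀ i, ε i ≤ 1) (β : Fin n →₀ ℕ) :
    wE ε β ≤ 1 :=
  Finset.prod_le_one (fun _ _ => zero_le) (fun i _ => pow_le_one' (h i) _)

lemma wnorm_mono {ε ε' : Fin n → ℝ} (hε : ∀ i, 0 ≤ ε i) (h : ∀ i, ε i ≤ ε' i)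
    (f : MvPowerSeries (Fin n) K) : wnorm abv ε f ≤ wnorm abv ε' f := by
  apply ENNReal.tsum_le_tsum
  intro β
  apply ENNReal.ofReal_le_ofReal
  apply mul_le_mul_of_nonneg_left _ (abv.nonneg _)
  apply Finset.prod_le_prod (fun i _ => pow_nonneg (hε i) _)
  exact fun i _ => pow_le_pow_left₀ (hε i) (h i) _

lemma exists_common_eps {M : ℕ} (F : Fin M → Fin N → MvPowerSeries (Fin n) K)
    (hF : ∀ a, IsConvV abv (F a)) :
    ∃ εr : Fin n → ℝ, (∀ i, 0 < εr i) ∧ (∀ i, εr i ≤ 1) ∧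
      ∀ a, vnorm abv εr (F a) < ⊤ := by
  induction M with
  | zero => exact ⟨fun _ => 1, fun _ => one_pos, fun _ => le_refl _, fun a => absurd a.2 (by omega)⟩
  | succ M ih =>
    obtain ⟨ε1, hε1pos, hε1le, hε1fin⟩ := ih (fun a => F a.succ) (fun a => hF a.succ)
    obtain ⟨ε2, hε2pos, hε2fin⟩ := hF 0
    refine ⟨fun i => min (ε1 i) (ε2 i), fun i => lt_min (hε1pos i) (hε2pos i),
      fun i => le_trans (min_le_left _ _) (hε1le i), ?_⟩
    intro a
    have hmin_nonneg : ∀ i, 0 ≤ min (ε1 i) (ε2 i) :=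
      fun i => le_of_lt (lt_min (hε1pos i) (hε2pos i))
    rcases Fin.eq_zero_or_eq_succ a with rfl | ⟨b, rfl⟩
    · calc vnorm abv (fun i => min (ε1 i) (ε2 i)) (F 0) ≤ vnorm abv ε2 (F 0) :=
          Finset.sum_le_sum (fun k _ => wnorm_mono abv hmin_nonneg (fun i => min_le_right _ _) _)
        _ < ⊤ := hε2fin
    · calc vnorm abv (fun i => min (ε1 i) (ε2 i)) (F b.succ) ≤ vnorm abv ε1 (F b.succ) :=
          Finset.sum_le_sum (fun k _ => wnorm_mono abv hmin_nonneg (fun i => min_le_left _ _) _)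
        _ < ⊤ := hε1fin b

lemma exists_ofReal_mul_le {X Y : ℝ≥0∞} (hX : X ≠ ⊤) (hY : 0 < Y) :
    ∃ s : ℝ, 0 < s ∧ s ≤ 1 ∧ ENNReal.ofReal s * X ≤ Y := by
  set Y' := min Y 1 with hY'
  have hY'pos : 0 < Y' := lt_min hY one_pos
  have hY'top : Y' ≠ ⊤ := by
    rw [hY']
    exact (min_le_right _ _).trans_lt (by norm_num) |>.ne
  have hden : (X + 1) ≠ 0 := by
    intro hc
    rw [add_eq_zero] at hc
    exact one_ne_zero hc.2
  have hdent : (X + 1) ≠ ⊤ := by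
    simp [hX]
  set q := Y' / (X + 1) with hq
  have hqle1 : q ≤ 1 := by
    rw [hq]
    apply ENNReal.div_le_of_le_mul
    calc Y' ≤ 1 := min_le_right _ _
      _ ≤ 1 * (X + 1) := by
          rw [one_mul]
          exact le_add_self
  have hqpos : 0 < q := ENNReal.div_pos hY'pos.ne' hdent
  have hqtop : q ≠ ⊤ := by
    rw [hq]
    exact (ENNReal.div_lt_top hY'top hden).ne
  refine ⟨q.toReal, ENNReal.toReal_pos hqpos.ne' hqtop, ?_, ?_⟩
  · calc q.toReal ≤ (1 : ℝ≥0∞).toReal := ENNReal.toReal_mono (by norm_num) hqle1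
      _ = 1 := by simp
  · rw [ENNReal.ofReal_toReal hqtop, hq]
    calc Y' / (X + 1) * X ≤ Y' / (X + 1) * (X + 1) := mul_le_mul_right le_self_add _
      _ = Y' := ENNReal.div_mul_cancel hden hdent
      _ ≤ Y := min_le_left _ _

-- ### weights realizing deglex
def Mw (N d : ℕ) {n : ℕ} (i : Fin n) : ℕ := (N + 1) * (d + 2) ^ (n - 1 - (i : ℕ))

def mu (N d : ℕ) {n : ℕ} (β : Fin n →₀ ℕ) : ℕ := ∑ i, Mw N d i * β i

lemma mu_lex {N d n : ℕ} {α β : Fin n →₀ ℕ} (hd : deg α = deg β) (hdle : deg α ≤ d)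
    (l : Fin n) (he : ∀ j, j < l → α j = β j) (hl : α l < β l) :
    mu N d α + (N + 1) ≤ mu N d β := by
  classical
  set W := N + 1 with hW
  set D := d + 2 with hD
  set sL := Finset.univ.filter (fun i : Fin n => i < l) with hsL
  set sG := Finset.univ.filter (fun i : Fin n => l < i) with hsG
  have hsplit : ∀ γ : Fin n →₀ ℕ, mu N d γ =
      (∑ i ∈ sL, Mw N d i * γ i) + Mw N d l * γ l + ∑ i ∈ sG, Mw N d i * γ i := by
    intro γ
    have hfilter : Finset.univ.filter (fun i : Fin n => ¬ i < l) = insert l sG := by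
      ext i
      simp only [Finset.mem_filter, Finset.mem_univ, true_and, Finset.mem_insert, hsG]
      constructor
      · intro hi
        rcases lt_trichotomy i l with h | h | h
        · exact absurd h hi
        · exact Or.inl h
        · exact Or.inr h
      · rintro (rfl | hi)
        · exact lt_irrefl _
        · exact fun hc => absurd (hc.trans hi) (lt_irrefl _)
    rw [mu, ← Finset.sum_filter_add_sum_filter_not Finset.univ (fun i : Fin n => i < l),
      hfilter, Finset.sum_insert (by simp [hsG]), ← add_assoc]
  have hsL_eq : (∑ i ∈ sL, Mw N d i * α i) = ∑ i ∈ sL, Mw N d i * β i := by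
    apply Finset.sum_congr rfl
    intro i hi
    rw [hsL, Finset.mem_filter] at hi
    rw [he i hi.2]
  have hMl_ge : W ≤ Mw N d l := by
    rw [Mw, ← hW, ← hD]
    exact Nat.le_mul_of_pos_right _ (Nat.pow_pos (by omega))
  have hKey : (∑ i ∈ sG, Mw N d i * α i) + W ≤ Mw N d l := by
    by_cases hcase : (l : ℕ) = n - 1
    · have hempty : sG = ∅ := by
        rw [hsG]
        apply Finset.filter_false_of_mem
        intro i _
        intro hc
        have h1 : (l : ℕ) < (i : ℕ) := hc
        have h2 : (i : ℕ) < n := i.isLt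
        omega
      rw [hempty, Finset.sum_empty, zero_add]
      exact hMl_ge
    · have hln : (l : ℕ) < n - 1 := by
        have := l.isLt
        omega
      have hbound : ∀ i ∈ sG, Mw N d i * α i ≤ W * D ^ (n - 2 - (l : ℕ)) * α i := by
        intro i hi
        rw [hsG, Finset.mem_filter] at hi
        apply Nat.mul_le_mul_right
        rw [Mw, ← hW, ← hD]
        apply Nat.mul_le_mul_left
        apply Nat.pow_le_pow_right (by omega)
        have h1 : (l : ℕ) < (i : ℕ) := hi.2
        omega
      have hsum : (∑ i ∈ sG, Mw N d i * α i) ≤ W * D ^ (n - 2 - (l : ℕ)) * d := by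
        calc (∑ i ∈ sG, Mw N d i * α i) ≤ ∑ i ∈ sG, W * D ^ (n - 2 - (l : ℕ)) * α i :=
              Finset.sum_le_sum hbound
          _ = W * D ^ (n - 2 - (l : ℕ)) * ∑ i ∈ sG, α i := by rw [Finset.mul_sum]
          _ ≤ W * D ^ (n - 2 - (l : ℕ)) * d := by
              apply Nat.mul_le_mul_left
              calc ∑ i ∈ sG, α i ≤ ∑ i, α i :=
                    Finset.sum_le_sum_of_subset (Finset.subset_univ _)
                _ = deg α := (deg_eq_sum α).symm
                _ ≤ d := hdle
      have hfin : W * D ^ (n - 2 - (l : ℕ)) * d + W ≤ Mw N d l := by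
        rw [Mw, ← hW, ← hD]
        have hexp : n - 1 - (l : ℕ) = (n - 2 - (l : ℕ)) + 1 := by omega
        rw [hexp, pow_succ]
        have hDge : 2 ≤ D := by omega
        have hpow : 1 ≤ D ^ (n - 2 - (l : ℕ)) := Nat.one_le_pow _ _ (by omega)
        calc W * D ^ (n - 2 - (l : ℕ)) * d + W
            ≤ W * D ^ (n - 2 - (l : ℕ)) * d + W * (D ^ (n - 2 - (l : ℕ)) * 2) := by
              have : W ≤ W * (D ^ (n - 2 - (l : ℕ)) * 2) :=
                Nat.le_mul_of_pos_right _ (by positivity)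
              omega
          _ = W * (D ^ (n - 2 - (l : ℕ)) * (d + 2)) := by ring
          _ = W * (D ^ (n - 2 - (l : ℕ)) * D) := by rw [← hD]
      omega
  calc mu N d α + W
      = ((∑ i ∈ sL, Mw N d i * α i) + Mw N d l * α l) +
          ((∑ i ∈ sG, Mw N d i * α i) + W) := by rw [hsplit α]; ring
    _ ≤ ((∑ i ∈ sL, Mw N d i * β i) + Mw N d l * α l) + Mw N d l := by
        rw [hsL_eq]; omega
    _ = (∑ i ∈ sL, Mw N d i * β i) + Mw N d l * (α l + 1) := by ring
    _ ≤ (∑ i ∈ sL, Mw N d i * β i) + Mw N d l * β l := by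
        have : Mw N d l * (α l + 1) ≤ Mw N d l * β l := Nat.mul_le_mul_left _ (by omega)
        omega
    _ ≤ mu N d β := by
        rw [hsplit β]
        omega

section Tail
variable {n N m : ℕ}
variable (abv : AbsoluteValue K ℝ)
variable (S : Fin m → Fin N → MvPowerSeries (Fin n) K)
variable (P : Fin m → (Fin n →₀ ℕ) × Fin N)

lemma tail_exponent {d : ℕ} {p q : (Fin n →₀ ℕ) × Fin N} (hgt : MMonGT p q)
    (hdeg : deg q.1 = deg p.1) (hdle : deg p.1 ≤ d) :
    mu N d p.1 + (p.2 : ℕ) + 1 ≤ mu N d q.1 + (q.2 : ℕ) := by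
  rcases hgt with hm | ⟨he, hk⟩
  · rcases hm with hlt | ⟨_, l, hel, hll⟩
    · omega
    · have := mu_lex (N := N) (d := d) hdeg.symm hdle l hel hll
      have hp2 : (p.2 : ℕ) < N := p.2.isLt
      omega
  · rw [he]
    have : (p.2 : ℕ) < (q.2 : ℕ) := hk
    omega

lemma wE_factor {d : ℕ} (ε0r : Fin n → ℝ) (h0 : ∀ i, 0 ≤ ε0r i) (t ρ : ℝ)
    (ht : 0 ≤ t) (hρ : 0 ≤ ρ) (β : Fin n →₀ ℕ) :
    wE (fun i => ENNReal.ofReal (ε0r i * t ^ Mw N d i * ρ)) β =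
      wE (fun i => ENNReal.ofReal (ε0r i)) β * (ENNReal.ofReal t) ^ (mu N d β) *
        (ENNReal.ofReal ρ) ^ (deg β) := by
  rw [wE, wE]
  have hfac : ∀ i : Fin n, (ENNReal.ofReal (ε0r i * t ^ Mw N d i * ρ)) ^ β i =
      (ENNReal.ofReal (ε0r i)) ^ β i * ((ENNReal.ofReal t) ^ (Mw N d i * β i)) *
        (ENNReal.ofReal ρ) ^ β i := by
    intro i
    rw [ENNReal.ofReal_mul (mul_nonneg (h0 i) (pow_nonneg ht _)), ENNReal.ofReal_mul (h0 i),
      ENNReal.ofReal_pow ht, mul_pow, mul_pow, ← pow_mul]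
  rw [Finset.prod_congr rfl (fun i _ => hfac i)]
  rw [Finset.prod_mul_distrib, Finset.prod_mul_distrib]
  rw [Finset.prod_pow_eq_pow_sum, Finset.prod_pow_eq_pow_sum]
  rw [deg_eq_sum]
  rfl

noncomputable def dmax : ℕ := Finset.univ.sup (fun j : Fin m => deg (P j).1)

noncomputable def bcF : Finset (Fin n →₀ ℕ) :=
  Finset.Iic (Finsupp.equivFunOnFinite.symm fun _ : Fin n => dmax P)

noncomputable def CB (j : Fin m) : ℝ≥0∞ :=
  ∑ k : Fin N, ∑ β ∈ bcF P, An abv (MvPowerSeries.coeff β (S j k))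

lemma CB_ne_top (j : Fin m) : CB abv S P j ≠ ⊤ := by
  rw [CB]
  refine (ENNReal.sum_lt_top.mpr ?_).ne
  intro k _
  refine ENNReal.sum_lt_top.mpr ?_
  intro β _
  exact (An_ne_top abv _).lt_top

lemma tail_estimate (hSLM : ∀ j, IsLM (S j) (P j)) (ε0r : Fin n → ℝ) (hε0pos : ∀ i, 0 < ε0r i) (hε0le : ∀ i, ε0r i ≤ 1)
    (t ρ : ℝ) (ht : 0 < t) (ht1 : t ≤ 1) (hρ : 0 < ρ) (hρ1 : ρ ≤ 1) (j : Fin m)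
    (hconT : ENNReal.ofReal t * (CB abv S P j * (2 * m) * 2) ≤
      An abv (lc S P j) * wE (fun i => ENNReal.ofReal (ε0r i)) (P j).1)
    (hconR : ENNReal.ofReal ρ * (nV abv (fun i => ENNReal.ofReal (ε0r i)) 1 (S j) * (2 * m) * 2) ≤
      An abv (lc S P j) * wE (fun i => ENNReal.ofReal (ε0r i)) (P j).1 *
        (ENNReal.ofReal t) ^ (mu N (dmax P) (P j).1 + (((P j).2 : Fin N) : ℕ))) :
    nV abv (fun i => ENNReal.ofReal (ε0r i * t ^ Mw N (dmax P) i * ρ)) (ENNReal.ofReal t)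
      (Tl S P j) * (2 * m) ≤
    CE abv (fun i => ENNReal.ofReal (ε0r i * t ^ Mw N (dmax P) i * ρ)) (ENNReal.ofReal t) S P j := by
  classical
  set d := dmax P with hdmax
  set E0 : Fin n → ℝ≥0∞ := fun i => ENNReal.ofReal (ε0r i) with hE0
  set tE : ℝ≥0∞ := ENNReal.ofReal t with htE
  set ρE : ℝ≥0∞ := ENNReal.ofReal ρ with hρE
  set εE : Fin n → ℝ≥0∞ := fun i => ENNReal.ofReal (ε0r i * t ^ Mw N d i * ρ) with hεE
  have htE1 : tE ≤ 1 := ENNReal.ofReal_le_one.mpr ht1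
  have hρE1 : ρE ≤ 1 := ENNReal.ofReal_le_one.mpr hρ1
  have hE0le1 : ∀ i, E0 i ≤ 1 := fun i => ENNReal.ofReal_le_one.mpr (hε0le i)
  have hwfac : ∀ β, wE εE β = wE E0 β * tE ^ (mu N d β) * ρE ^ (deg β) :=
    wE_factor ε0r (fun i => (hε0pos i).le) t ρ ht.le hρ.le
  set dj := deg (P j).1 with hdj
  have hdjle : dj ≤ d := by
    rw [hdj, hdmax]
    exact Finset.le_sup (f := fun j : Fin m => deg (P j).1) (Finset.mem_univ j)
  -- coefficient bound for the tail
  have hcoeffTl : ∀ (k : Fin N) (β : Fin n →₀ ℕ),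
      An abv (MvPowerSeries.coeff β (Tl S P j k)) ≤
        (if ((β, k) : (Fin n →₀ ℕ) × Fin N) = P j then 0
          else An abv (MvPowerSeries.coeff β (S j k))) := by
    intro k β
    by_cases hp : ((β, k) : (Fin n →₀ ℕ) × Fin N) = P j
    · rw [if_pos hp]
      have hk : k = (P j).2 := by rw [← hp]
      have hβ : β = (P j).1 := by rw [← hp]
      have : MvPowerSeries.coeff β (Tl S P j k) = 0 := by
        show MvPowerSeries.coeff β (LT S P j k - S j k) = 0
        rw [map_sub]
        unfold LT
        rw [if_pos hk, MvPowerSeries.coeff_monomial, if_pos hβ, hβ, hk]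
        show lc S P j - lc S P j = 0
        ring
      rw [this, An_zero abv]
    · rw [if_neg hp]
      have : MvPowerSeries.coeff β (Tl S P j k) = - MvPowerSeries.coeff β (S j k) := by
        show MvPowerSeries.coeff β (LT S P j k - S j k) = _
        rw [map_sub]
        unfold LT
        by_cases hk : k = (P j).2
        · rw [if_pos hk, MvPowerSeries.coeff_monomial, if_neg, zero_sub]
          intro hβ
          exact hp (Prod.ext hβ hk)
        · rw [if_neg hk]
          show MvPowerSeries.coeff β (0 : MvPowerSeries (Fin n) K) - _ = _
          rw [map_zero, zero_sub]
      rw [this, An, abv.map_neg]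
      exact le_refl _
  -- the "monomial in the tail" fact
  have htail : ∀ (k : Fin N) (β : Fin n →₀ ℕ),
      ((β, k) : (Fin n →₀ ℕ) × Fin N) ≠ P j →
      MvPowerSeries.coeff β (S j k) ≠ 0 → MMonGT (P j) ((β, k)) := by
    intro k β hp hc
    rcases (hSLM j).2 (β, k) hc with he | hgt
    · exact absurd he hp
    · exact hgt
  -- buckets
  set F1 : Fin N → (Fin n →₀ ℕ) → ℝ≥0∞ := fun k β =>
    if deg β = dj ∧ ((β, k) : (Fin n →₀ ℕ) × Fin N) ≠ P j then
      An abv (MvPowerSeries.coeff β (S j k)) * wE εE β else 0 with hF1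
  set F2 : Fin N → (Fin n →₀ ℕ) → ℝ≥0∞ := fun k β =>
    if dj < deg β then An abv (MvPowerSeries.coeff β (S j k)) * wE εE β else 0 with hF2
  have hsplit : ∀ (k : Fin N) (β : Fin n →₀ ℕ),
      An abv (MvPowerSeries.coeff β (Tl S P j k)) * wE εE β ≤ F1 k β + F2 k β := by
    intro k β
    by_cases hp : ((β, k) : (Fin n →₀ ℕ) × Fin N) = P j
    · calc An abv (MvPowerSeries.coeff β (Tl S P j k)) * wE εE β
          ≤ 0 * wE εE β := mul_le_mul_left (le_trans (hcoeffTl k β) (by rw [if_pos hp])) _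
        _ = 0 := by rw [zero_mul]
        _ ≤ F1 k β + F2 k β := zero_le
    · have hb : An abv (MvPowerSeries.coeff β (Tl S P j k)) * wE εE β ≤
          An abv (MvPowerSeries.coeff β (S j k)) * wE εE β :=
        mul_le_mul_left (le_trans (hcoeffTl k β) (by rw [if_neg hp])) _
      rcases lt_trichotomy (deg β) dj with hlt | heq | hgt
      · by_cases hc : MvPowerSeries.coeff β (S j k) = 0
        · calc An abv (MvPowerSeries.coeff β (Tl S P j k)) * wE εE β
              ≤ An abv (MvPowerSeries.coeff β (S j k)) * wE εE β := hb
            _ = 0 := by rw [hc, An_zero abv, zero_mul]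
            _ ≤ F1 k β + F2 k β := zero_le
        · exfalso
          have := (htail k β hp hc).deg_le
          simp only at this
          omega
      · calc An abv (MvPowerSeries.coeff β (Tl S P j k)) * wE εE β
            ≤ An abv (MvPowerSeries.coeff β (S j k)) * wE εE β := hb
          _ = F1 k β := by rw [hF1]; simp only [heq, hp, if_pos, ne_eq, not_false_eq_true, and_self]
          _ ≤ F1 k β + F2 k β := le_self_add
      · calc An abv (MvPowerSeries.coeff β (Tl S P j k)) * wE εE β
            ≤ An abv (MvPowerSeries.coeff β (S j k)) * wE εE β := hb
          _ = F2 k β := by rw [hF2]; simp only [hgt, if_pos]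
          _ ≤ F1 k β + F2 k β := le_add_self
  -- helper : divide by two
  have half_le : ∀ {x y : ℝ≥0∞}, x * 2 ≤ y → x ≤ y * 2⁻¹ := by
    intro x y hxy
    calc x = x * 2 * 2⁻¹ := by
          rw [mul_assoc, ENNReal.mul_inv_cancel two_ne_zero (by norm_num), mul_one]
      _ ≤ y * 2⁻¹ := mul_le_mul_left hxy _
  -- bucket 1 is supported on bcF
  have hbcF : ∀ (k : Fin N) (β : Fin n →₀ ℕ), β ∉ bcF P → F1 k β = 0 := by
    intro k β hβ
    rw [hF1]
    dsimp only
    rw [if_neg]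
    rintro ⟨hdeg, -⟩
    apply hβ
    rw [bcF, Finset.mem_Iic, Finsupp.le_def]
    intro i
    have h1 : β i ≤ deg β := coord_le_deg β i
    have h2 : deg β = dj := hdeg
    have h3 : dj ≤ dmax P := by rw [← hdmax]; exact hdjle
    simpa using by omega
  have hB1sum : ∀ k, (∑' β : Fin n →₀ ℕ, F1 k β) = ∑ β ∈ bcF P, F1 k β :=
    fun k => tsum_eq_sum (fun β hβ => hbcF k β hβ)
  -- per-term bound, bucket 1
  have hF1term : ∀ (k : Fin N) (β : Fin n →₀ ℕ), tE ^ (k : ℕ) * F1 k β ≤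
      An abv (MvPowerSeries.coeff β (S j k)) *
        (tE ^ (mu N d (P j).1 + (((P j).2 : Fin N) : ℕ) + 1) * ρE ^ dj) := by
    intro k β
    rw [hF1]
    dsimp only
    split_ifs with hcond
    · obtain ⟨hdeg, hp⟩ := hcond
      by_cases hc : MvPowerSeries.coeff β (S j k) = 0
      · rw [hc, An_zero abv, zero_mul, mul_zero, zero_mul]
      · have hgt := htail k β hp hc
        have hexp : mu N d (P j).1 + (((P j).2 : Fin N) : ℕ) + 1 ≤ mu N d β + (k : ℕ) :=
          tail_exponent (d := d) hgt hdeg hdjle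
        calc tE ^ (k : ℕ) * (An abv (MvPowerSeries.coeff β (S j k)) * wE εE β)
            = An abv (MvPowerSeries.coeff β (S j k)) *
                (wE E0 β * (tE ^ (mu N d β + (k : ℕ)) * ρE ^ dj)) := by
              rw [hwfac β, hdeg, pow_add]
              ring
          _ ≤ An abv (MvPowerSeries.coeff β (S j k)) *
                (1 * (tE ^ (mu N d (P j).1 + (((P j).2 : Fin N) : ℕ) + 1) * ρE ^ dj)) := by
              apply mul_le_mul_right
              exact mul_le_mul' (wE_le_one hE0le1 β)
                (mul_le_mul_left (pow_le_pow_of_le_one (zero_le) htE1 hexp) _)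
          _ = An abv (MvPowerSeries.coeff β (S j k)) *
                (tE ^ (mu N d (P j).1 + (((P j).2 : Fin N) : ℕ) + 1) * ρE ^ dj) := by
              rw [one_mul]
    · rw [mul_zero]
      exact zero_le
  -- total bound, bucket 1
  have hB1 : (∑ k : Fin N, tE ^ (k : ℕ) * ∑' β : Fin n →₀ ℕ, F1 k β) ≤
      CB abv S P j * (tE ^ (mu N d (P j).1 + (((P j).2 : Fin N) : ℕ) + 1) * ρE ^ dj) := by
    rw [CB, Finset.sum_mul]
    apply Finset.sum_le_sum
    intro k _
    rw [hB1sum k, Finset.mul_sum, Finset.sum_mul]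
    exact Finset.sum_le_sum (fun β _ => hF1term k β)
  -- per-term bound, bucket 2
  have hF2term : ∀ (k : Fin N) (β : Fin n →₀ ℕ), tE ^ (k : ℕ) * F2 k β ≤
      (An abv (MvPowerSeries.coeff β (S j k)) * wE E0 β) * ρE ^ (dj + 1) := by
    intro k β
    rw [hF2]
    dsimp only
    split_ifs with hcond
    · calc tE ^ (k : ℕ) * (An abv (MvPowerSeries.coeff β (S j k)) * wE εE β)
          = (An abv (MvPowerSeries.coeff β (S j k)) * wE E0 β) *
              (tE ^ (mu N d β + (k : ℕ)) * ρE ^ (deg β)) := by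
            rw [hwfac β, pow_add]
            ring
        _ ≤ (An abv (MvPowerSeries.coeff β (S j k)) * wE E0 β) *
              (1 * ρE ^ (dj + 1)) := by
            apply mul_le_mul_right
            exact mul_le_mul' (pow_le_one' htE1 _)
              (pow_le_pow_of_le_one (zero_le) hρE1 hcond)
        _ = (An abv (MvPowerSeries.coeff β (S j k)) * wE E0 β) * ρE ^ (dj + 1) := by
            rw [one_mul]
    · rw [mul_zero]
      exact zero_le
  -- total bound, bucket 2
  have hB2 : (∑ k : Fin N, tE ^ (k : ℕ) * ∑' β : Fin n →₀ ℕ, F2 k β) ≤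
      nV abv E0 1 (S j) * ρE ^ (dj + 1) := by
    rw [nV, Finset.sum_mul]
    apply Finset.sum_le_sum
    intro k _
    calc tE ^ (k : ℕ) * ∑' β : Fin n →₀ ℕ, F2 k β
        = ∑' β : Fin n →₀ ℕ, tE ^ (k : ℕ) * F2 k β := (ENNReal.tsum_mul_left).symm
      _ ≤ ∑' β : Fin n →₀ ℕ, (An abv (MvPowerSeries.coeff β (S j k)) * wE E0 β) *
            ρE ^ (dj + 1) := ENNReal.tsum_le_tsum (fun β => hF2term k β)
      _ = nE abv E0 (S j k) * ρE ^ (dj + 1) := by rw [ENNReal.tsum_mul_right]; rfl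
      _ = (1 : ℝ≥0∞) ^ (k : ℕ) * nE abv E0 (S j k) * ρE ^ (dj + 1) := by
          rw [one_pow, one_mul]
  -- put the two buckets together
  have hmain : nV abv εE tE (Tl S P j) ≤
      (∑ k : Fin N, tE ^ (k : ℕ) * ∑' β : Fin n →₀ ℕ, F1 k β) +
      (∑ k : Fin N, tE ^ (k : ℕ) * ∑' β : Fin n →₀ ℕ, F2 k β) := by
    rw [nV, ← Finset.sum_add_distrib]
    apply Finset.sum_le_sum
    intro k _
    rw [← mul_add]
    apply mul_le_mul_right
    calc nE abv εE (Tl S P j k)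
        ≤ ∑' β : Fin n →₀ ℕ, (F1 k β + F2 k β) :=
          ENNReal.tsum_le_tsum (fun β => hsplit k β)
      _ = (∑' β : Fin n →₀ ℕ, F1 k β) + ∑' β : Fin n →₀ ℕ, F2 k β := ENNReal.tsum_add
  -- identify CE
  have hCE : CE abv εE tE S P j =
      An abv (lc S P j) * wE E0 (P j).1 *
        (tE ^ (mu N d (P j).1 + (((P j).2 : Fin N) : ℕ)) * ρE ^ dj) := by
    rw [CE, hwfac (P j).1, pow_add, ← hdj]
    ring
  -- final computation
  have hcase1 : (∑ k : Fin N, tE ^ (k : ℕ) * ∑' β : Fin n →₀ ℕ, F1 k β) * (2 * m) ≤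
      CE abv εE tE S P j * 2⁻¹ := by
    apply half_le
    calc (∑ k : Fin N, tE ^ (k : ℕ) * ∑' β : Fin n →₀ ℕ, F1 k β) * (2 * m) * 2
        ≤ CB abv S P j * (tE ^ (mu N d (P j).1 + (((P j).2 : Fin N) : ℕ) + 1) * ρE ^ dj) *
            (2 * m) * 2 := by
          exact mul_le_mul_left (mul_le_mul_left hB1 _) _
      _ = (tE * (CB abv S P j * (2 * m) * 2)) *
            (tE ^ (mu N d (P j).1 + (((P j).2 : Fin N) : ℕ)) * ρE ^ dj) := by
          rw [pow_succ]
          ring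
      _ ≤ (An abv (lc S P j) * wE E0 (P j).1) *
            (tE ^ (mu N d (P j).1 + (((P j).2 : Fin N) : ℕ)) * ρE ^ dj) :=
          mul_le_mul_left hconT _
      _ = CE abv εE tE S P j := by rw [hCE]
  have hcase2 : (∑ k : Fin N, tE ^ (k : ℕ) * ∑' β : Fin n →₀ ℕ, F2 k β) * (2 * m) ≤
      CE abv εE tE S P j * 2⁻¹ := by
    apply half_le
    calc (∑ k : Fin N, tE ^ (k : ℕ) * ∑' β : Fin n →₀ ℕ, F2 k β) * (2 * m) * 2
        ≤ nV abv E0 1 (S j) * ρE ^ (dj + 1) * (2 * m) * 2 :=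
          mul_le_mul_left (mul_le_mul_left hB2 _) _
      _ = (ρE * (nV abv E0 1 (S j) * (2 * m) * 2)) * ρE ^ dj := by
          rw [pow_succ]
          ring
      _ ≤ (An abv (lc S P j) * wE E0 (P j).1 *
            tE ^ (mu N d (P j).1 + (((P j).2 : Fin N) : ℕ))) * ρE ^ dj :=
          mul_le_mul_left hconR _
      _ = CE abv εE tE S P j := by rw [hCE]; ring
  calc nV abv εE tE (Tl S P j) * (2 * m)
      ≤ ((∑ k : Fin N, tE ^ (k : ℕ) * ∑' β : Fin n →₀ ℕ, F1 k β) +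
          (∑ k : Fin N, tE ^ (k : ℕ) * ∑' β : Fin n →₀ ℕ, F2 k β)) * (2 * m) :=
        mul_le_mul_left hmain _
    _ = (∑ k : Fin N, tE ^ (k : ℕ) * ∑' β : Fin n →₀ ℕ, F1 k β) * (2 * m) +
        (∑ k : Fin N, tE ^ (k : ℕ) * ∑' β : Fin n →₀ ℕ, F2 k β) * (2 * m) := by
        rw [add_mul]
    _ ≤ CE abv εE tE S P j * 2⁻¹ + CE abv εE tE S P j * 2⁻¹ := add_le_add hcase1 hcase2
    _ = CE abv εE tE S P j := by
        rw [← mul_add, ENNReal.inv_two_add_inv_two, mul_one]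


end Tail

end E


-- ### glue lemmas

section Glue
variable {n N m : ℕ}
variable (abv : AbsoluteValue K ℝ)

lemma lt_top_of_mul_lt {a b : ℝ≥0∞} (ha : a ≠ 0) (h : a * b < ⊤) : b < ⊤ := by
  by_contra hb
  rw [not_lt, top_le_iff] at hb
  rw [hb, ENNReal.mul_top ha] at h
  exact lt_irrefl _ h

lemma inf_pos_of_pos {ι : Type} (s : Finset ι) (f : ι → ℝ≥0∞) (h : ∀ i ∈ s, 0 < f i) :
    0 < s.inf f := by
  classical
  induction s using Finset.induction_on with
  | empty => simp
  | @insert a s ha ih =>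
    rw [Finset.inf_insert, lt_inf_iff]
    exact ⟨h a (Finset.mem_insert_self a s),
      ih (fun i hi => h i (Finset.mem_insert_of_mem hi))⟩

lemma nV_eq_vnorm (ε0r : Fin n → ℝ) (hεr : ∀ i, 0 ≤ ε0r i)
    (f : Fin N → MvPowerSeries (Fin n) K) :
    nV abv (fun i => ENNReal.ofReal (ε0r i)) 1 f = vnorm abv ε0r f := by
  rw [nV, vnorm]
  apply Finset.sum_congr rfl
  intro k _
  rw [one_pow, one_mul, wnorm_eq_nE abv ε0r hεr]

lemma isConv_neg_one : IsConv abv (-(1 : MvPowerSeries (Fin n) K)) := by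
  classical
  refine ⟨fun _ => 1, fun _ => one_pos, ?_⟩
  rw [wnorm]
  rw [tsum_eq_sum (s := {(0 : Fin n →₀ ℕ)}) ?side]
  case side =>
    intro b hb
    rw [Finset.mem_singleton] at hb
    rw [map_neg, MvPowerSeries.coeff_one, if_neg hb]
    simp
  rw [Finset.sum_singleton, map_neg, MvPowerSeries.coeff_one, if_pos rfl]
  simp

lemma combo_mem {I : Set (Fin N → MvPowerSeries (Fin n) K)} (hI : IsConvSubmodule abv I)
    (S : Fin m → Fin N → MvPowerSeries (Fin n) K) (hS : ∀ j, S j ∈ I)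
    (q : Fin m → MvPowerSeries (Fin n) K) (hq : ∀ j, IsConv abv (q j)) :
    (fun k => ∑ j, q j * S j k) ∈ I := by
  classical
  suffices h : ∀ s : Finset (Fin m), (fun k => ∑ j ∈ s, q j * S j k) ∈ I from h Finset.univ
  intro s
  induction s using Finset.induction_on with
  | empty =>
    have heq0 : (fun k : Fin N => ∑ j ∈ (∅ : Finset (Fin m)), q j * S j k) =
        (0 : Fin N → MvPowerSeries (Fin n) K) := by
      funext k
      simp
    rw [heq0]
    exact hI.1
  | @insert a s ha ih =>
    have h1 : (fun k => q a * S a k) ∈ I := hI.2.2.2 (q a) (hq a) (S a) (hS a)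
    have h2 := hI.2.2.1 _ h1 _ ih
    have heq : (fun k => ∑ j ∈ insert a s, q j * S j k) =
        (fun k => q a * S a k) + (fun k => ∑ j ∈ s, q j * S j k) := by
      funext k
      simp [Finset.sum_insert ha]
    rw [heq]
    exact h2

-- ### the division theorem with convergence
theorem grauert_division (S : Fin m → Fin N → MvPowerSeries (Fin n) K)
    (P : Fin m → (Fin n →₀ ℕ) × Fin N) (hSLM : ∀ j, IsLM (S j) (P j))
    (hSconv : ∀ j, IsConvV abv (S j)) (g : Fin N → MvPowerSeries (Fin n) K)
    (hg : IsConvV abv g) :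
    (∀ j, IsConv abv (qdiv S P g j)) ∧ IsConvV abv (rdiv S P g) := by
  classical
  have hlc : ∀ j, lc S P j ≠ 0 := fun j => (hSLM j).1
  -- step 1 : a common ε₀
  obtain ⟨ε0r, hε0pos, hε0le, hε0fin⟩ := exists_common_eps abv
    (M := m + 1) (Fin.cases g S) (by
      intro a
      rcases Fin.eq_zero_or_eq_succ a with rfl | ⟨b, rfl⟩
      · simpa using hg
      · simpa using hSconv b)
  set E0 : Fin n → ℝ≥0∞ := fun i => ENNReal.ofReal (ε0r i) with hE0def
  have hε0nonneg : ∀ i, 0 ≤ ε0r i := fun i => (hε0pos i).le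
  have hE0g : nV abv E0 1 g < ⊤ := by
    rw [hE0def, nV_eq_vnorm abv ε0r hε0nonneg]
    simpa using hε0fin 0
  have hE0S : ∀ j, nV abv E0 1 (S j) < ⊤ := by
    intro j
    rw [hE0def, nV_eq_vnorm abv ε0r hε0nonneg]
    simpa using hε0fin j.succ
  have hE0ne0 : ∀ i, E0 i ≠ 0 := fun i => (ENNReal.ofReal_pos.mpr (hε0pos i)).ne'
  -- step 2 : choose t
  set d := dmax P with hd
  have hXt : (∑ j : Fin m, (CB abv S P j * (2 * (m : ℝ≥0∞)) * 2)) ≠ ⊤ := by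
    refine (ENNReal.sum_lt_top.mpr ?_).ne
    intro j _
    exact ENNReal.mul_lt_top
      (ENNReal.mul_lt_top (CB_ne_top abv S P j).lt_top
        (by
          refine ENNReal.mul_lt_top ?_ ?_ <;> simp [ENNReal.natCast_ne_top]))
      (by norm_num)
  have hYt : 0 < Finset.univ.inf (fun j : Fin m => An abv (lc S P j) * wE E0 (P j).1) := by
    apply inf_pos_of_pos
    intro j _
    rw [pos_iff_ne_zero]
    exact mul_ne_zero (An_pos abv (hlc j)).ne' (wE_ne_zero E0 hE0ne0 _)
  obtain ⟨t, htpos, ht1, hcont⟩ := exists_ofReal_mul_le hXt hYt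
  have hconT : ∀ j, ENNReal.ofReal t * (CB abv S P j * (2 * (m : ℝ≥0∞)) * 2) ≤
      An abv (lc S P j) * wE E0 (P j).1 := by
    intro j
    calc ENNReal.ofReal t * (CB abv S P j * (2 * (m : ℝ≥0∞)) * 2)
        ≤ ENNReal.ofReal t * ∑ j' : Fin m, (CB abv S P j' * (2 * (m : ℝ≥0∞)) * 2) :=
          mul_le_mul_right (Finset.single_le_sum
            (f := fun j' : Fin m => CB abv S P j' * (2 * (m : ℝ≥0∞)) * 2)
            (fun j' _ => zero_le) (Finset.mem_univ j)) _
      _ ≤ Finset.univ.inf (fun j : Fin m => An abv (lc S P j) * wE E0 (P j).1) := hcont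
      _ ≤ An abv (lc S P j) * wE E0 (P j).1 := Finset.inf_le (Finset.mem_univ j)
  set tE : ℝ≥0∞ := ENNReal.ofReal t with htEdef
  have htEne0 : tE ≠ 0 := (ENNReal.ofReal_pos.mpr htpos).ne'
  -- step 3 : choose ρ
  have hXr : (∑ j : Fin m, (nV abv E0 1 (S j) * (2 * (m : ℝ≥0∞)) * 2)) ≠ ⊤ := by
    refine (ENNReal.sum_lt_top.mpr ?_).ne
    intro j _
    exact ENNReal.mul_lt_top
      (ENNReal.mul_lt_top (hE0S j)
        (by
          refine ENNReal.mul_lt_top ?_ ?_ <;> simp [ENNReal.natCast_ne_top]))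
      (by norm_num)
  have hYr : 0 < Finset.univ.inf (fun j : Fin m => An abv (lc S P j) * wE E0 (P j).1 *
      tE ^ (mu N d (P j).1 + (((P j).2 : Fin N) : ℕ))) := by
    apply inf_pos_of_pos
    intro j _
    rw [pos_iff_ne_zero]
    exact mul_ne_zero (mul_ne_zero (An_pos abv (hlc j)).ne' (wE_ne_zero E0 hE0ne0 _))
      (pow_ne_zero _ htEne0)
  obtain ⟨ρ, hρpos, hρ1, hconr⟩ := exists_ofReal_mul_le hXr hYr
  have hconR : ∀ j, ENNReal.ofReal ρ * (nV abv E0 1 (S j) * (2 * (m : ℝ≥0∞)) * 2) ≤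
      An abv (lc S P j) * wE E0 (P j).1 *
        tE ^ (mu N d (P j).1 + (((P j).2 : Fin N) : ℕ)) := by
    intro j
    calc ENNReal.ofReal ρ * (nV abv E0 1 (S j) * (2 * (m : ℝ≥0∞)) * 2)
        ≤ ENNReal.ofReal ρ * ∑ j' : Fin m, (nV abv E0 1 (S j') * (2 * (m : ℝ≥0∞)) * 2) :=
          mul_le_mul_right (Finset.single_le_sum
            (f := fun j' : Fin m => nV abv E0 1 (S j') * (2 * (m : ℝ≥0∞)) * 2)
            (fun j' _ => zero_le) (Finset.mem_univ j)) _
      _ ≤ Finset.univ.inf (fun j : Fin m => An abv (lc S P j) * wE E0 (P j).1 *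
            tE ^ (mu N d (P j).1 + (((P j).2 : Fin N) : ℕ))) := hconr
      _ ≤ _ := Finset.inf_le (Finset.mem_univ j)
  -- step 4 : the final parameters
  set εf : Fin n → ℝ := fun i => ε0r i * t ^ Mw N d i * ρ with hεfdef
  have hεfpos : ∀ i, 0 < εf i := fun i =>
    mul_pos (mul_pos (hε0pos i) (pow_pos htpos _)) hρpos
  set εE : Fin n → ℝ≥0∞ := fun i => ENNReal.ofReal (εf i) with hεEdef
  have hεEne0 : ∀ i, εE i ≠ 0 := fun i => (ENNReal.ofReal_pos.mpr (hεfpos i)).ne'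
  have HT : ∀ j, nV abv εE tE (Tl S P j) * (2 * (m : ℝ≥0∞)) ≤ CE abv εE tE S P j := by
    intro j
    exact tail_estimate abv S P hSLM ε0r hε0pos hε0le t ρ htpos ht1 hρpos hρ1 j
      (hconT j) (hconR j)
  have hεEleE0 : ∀ i, εE i ≤ E0 i := by
    intro i
    apply ENNReal.ofReal_le_ofReal
    have h1 : t ^ Mw N d i ≤ 1 := pow_le_one₀ htpos.le ht1
    calc ε0r i * t ^ Mw N d i * ρ ≤ ε0r i * 1 * 1 := by
          apply mul_le_mul (mul_le_mul le_rfl h1 (pow_nonneg htpos.le _) (hε0pos i).le) hρ1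
            hρpos.le (mul_nonneg (hε0pos i).le zero_le_one)
      _ = ε0r i := by ring
  have htE1 : tE ≤ 1 := ENNReal.ofReal_le_one.mpr ht1
  have hgfin : nV abv εE tE g < ⊤ := by
    apply lt_of_le_of_lt _ hE0g
    apply Finset.sum_le_sum
    intro k _
    calc tE ^ (k : ℕ) * nE abv εE (g k) ≤ 1 * nE abv E0 (g k) :=
          mul_le_mul' (pow_le_one' htE1 _) (nE_mono abv hεEleE0 (g k))
      _ = (1 : ℝ≥0∞) ^ (k : ℕ) * nE abv E0 (g k) := by rw [one_pow]
  -- conclusions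
  have hCEne0 : ∀ j, CE abv εE tE S P j ≠ 0 := fun j => CE_ne_zero abv εE tE S P (hlc j)
    hεEne0 htEne0
  constructor
  · intro j
    refine ⟨εf, hεfpos, ?_⟩
    rw [wnorm_eq_nE abv εf (fun i => (hεfpos i).le)]
    have hq := qdiv_estimate abv εE tE S P hlc HT g j
    apply lt_top_of_mul_lt (hCEne0 j)
    exact lt_of_le_of_lt hq (ENNReal.mul_lt_top hgfin (by norm_num))
  · refine ⟨εf, hεfpos, ?_⟩
    have hr := rdiv_estimate abv εE tE S P hlc HT g
    have hrfin : nV abv εE tE (rdiv S P g) < ⊤ :=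
      lt_of_le_of_lt hr (ENNReal.mul_lt_top hgfin (by norm_num))
    rw [vnorm]
    refine ENNReal.sum_lt_top.mpr ?_
    intro k _
    rw [wnorm_eq_nE abv εf (fun i => (hεfpos i).le)]
    apply lt_top_of_mul_lt (pow_ne_zero (k : ℕ) htEne0)
    apply lt_of_le_of_lt _ hrfin
    exact Finset.single_le_sum
      (f := fun k : Fin N => tE ^ (k : ℕ) * nE abv εE (rdiv S P g k))
      (fun k _ => zero_le) (Finset.mem_univ k)

end Glue

/-- Lemma 2.8 (2): if `I ⊆ J` are submodules of `K{x}^N` and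
`L(I) = L(J)`, then `I = J`. -/
theorem eq_of_leadingModule_eq {K : Type} [Field K] (abv : AbsoluteValue K ℝ)
    {n N : ℕ} (I J : Set (Fin N → MvPowerSeries (Fin n) K))
    (hI : IsConvSubmodule abv I) (hJ : IsConvSubmodule abv J)
    (hIJ : I ⊆ J) (hL : leadingModule I = leadingModule J) :
    I = J := by
  classical
  apply Set.Subset.antisymm hIJ
  intro g hgJ
  obtain ⟨m, S, P, hSI, hSLM, hdvd⟩ := exists_std_basis I J hL
  have hSconv : ∀ j, IsConvV abv (S j) := fun j => hI.2.1 (S j) (hSI j)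
  have hg : IsConvV abv g := hJ.2.1 g hgJ
  obtain ⟨hqconv, hrconv⟩ := grauert_division abv S P hSLM hSconv g hg
  have hid := division_identity S P hSLM g
  have hsvI : (fun k => ∑ j, qdiv S P g j * S j k) ∈ I :=
    combo_mem abv hI S hSI _ hqconv
  by_cases hr0 : rdiv S P g = 0
  · rw [hr0, add_zero] at hid
    rw [hid]
    exact hsvI
  · exfalso
    have hsvJ : (fun k => ∑ j, qdiv S P g j * S j k) ∈ J := hIJ hsvI
    have hnegJ : (fun k => -(1 : MvPowerSeries (Fin n) K) *
        (fun k' => ∑ j, qdiv S P g j * S j k') k) ∈ J :=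
      hJ.2.2.2 _ (isConv_neg_one abv) _ hsvJ
    have hrJ : rdiv S P g ∈ J := by
      have hadd := hJ.2.2.1 g hgJ _ hnegJ
      have heqr : rdiv S P g = g + fun k => -(1 : MvPowerSeries (Fin n) K) *
          (fun k' => ∑ j, qdiv S P g j * S j k') k := by
        funext k
        have h1 := congrFun hid k
        rw [Pi.add_apply] at h1
        rw [Pi.add_apply]
        dsimp only at h1 ⊢
        rw [h1]
        ring
      rw [heqr]
      exact hadd
    obtain ⟨p, hp⟩ := exists_isLM hr0
    obtain ⟨j, hj⟩ := hdvd (rdiv S P g) hrJ p hp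
    exact rdiv_remainder S P hSLM g (k := p.2) (β := p.1) hp.1 j (by simpa using hj)
end GrauertRVF
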